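/- arXiv:quant-ph/0309186 — 4 statements merged into one kernel-verified Lean document; each statement's English description precedes it below -/
import Mathlib

section
/- For any pure three-qutrit state, with λ_1^{(a)} ≤ λ_2^{(a)} ≤ λ_3^{(a)} the increasingly ordered eigenvalues of the a-th one-particle reduced density matrix, the inequality λ_2^{(a)} + λ_1^{(a)} ≤ λ_2^{(b)} + λ_1^{(b)} + λ_2^{(c)} + λ_1^{(c)} holds for every permutation (a,b,c) of (1,2,3). -/
open scoped BigOperators
open Matrix Complex ComplexConjugate

/-- The one-particle reduced density matrix of the first qutrit. -/
noncomputable def rho1 (c : Fin 3 → Fin 3 → Fin 3 → ℂ) : Matrix (Fin 3) (Fin 3) ℂ :=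
  Matrix.of fun i i' => ∑ j : Fin 3, ∑ k : Fin 3, c i j k * (starRingEnd ℂ) (c i' j k)

/-- The one-particle reduced density matrix of the second qutrit. -/
noncomputable def rho2 (c : Fin 3 → Fin 3 → Fin 3 → ℂ) : Matrix (Fin 3) (Fin 3) ℂ :=
  Matrix.of fun j j' => ∑ i : Fin 3, ∑ k : Fin 3, c i j k * (starRingEnd ℂ) (c i j' k)

/-- The one-particle reduced density matrix of the third qutrit. -/
noncomputable def rho3 (c : Fin 3 → Fin 3 → Fin 3 → ℂ) : Matrix (Fin 3) (Fin 3) ℂ :=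
  Matrix.of fun k k' => ∑ i : Fin 3, ∑ j : Fin 3, c i j k * (starRingEnd ℂ) (c i j k')

/-- `l` lists the eigenvalues of the Hermitian matrix `M` in increasing order. -/
def IsOrderedSpectrum (M : Matrix (Fin 3) (Fin 3) ℂ) (l : Fin 3 → ℝ) : Prop :=
  Monotone l ∧ ∃ hM : M.IsHermitian, ∃ σ : Equiv.Perm (Fin 3),
    ∀ i, l i = hM.eigenvalues (σ i)


lemma norm_sq_eucl {ι : Type*} [Fintype ι] (a : EuclideanSpace ℂ ι) :
    ‖a‖ ^ 2 = ∑ i, Complex.normSq (a i) := by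
  rw [EuclideanSpace.norm_eq, Real.sq_sqrt (by positivity)]
  refine Finset.sum_congr rfl fun i _ => ?_
  rw [Complex.normSq_eq_norm_sq]

lemma cs_sum {ι : Type*} [Fintype ι] (a b : ι → ℂ) :
    Complex.normSq (∑ i, (starRingEnd ℂ) (a i) * b i) ≤
      (∑ i, Complex.normSq (a i)) * (∑ i, Complex.normSq (b i)) := by
  set a' : EuclideanSpace ℂ ι := WithLp.toLp 2 a with ha'
  set b' : EuclideanSpace ℂ ι := WithLp.toLp 2 b with hb'
  have h := norm_inner_le_norm (𝕜 := ℂ) a' b'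
  have h2 : inner ℂ a' b' = ∑ i, (starRingEnd ℂ) (a i) * b i := by
    rw [PiLp.inner_apply]
    refine Finset.sum_congr rfl fun i _ => ?_
    simp [mul_comm, ha', hb']
  rw [h2] at h
  have h3 := mul_self_le_mul_self (norm_nonneg _) h
  have h4 : ‖a'‖ * ‖b'‖ * (‖a'‖ * ‖b'‖) = ‖a'‖^2 * ‖b'‖^2 := by ring
  rw [h4, norm_sq_eucl, norm_sq_eucl] at h3
  calc Complex.normSq (∑ i, (starRingEnd ℂ) (a i) * b i)
      = ‖∑ i, (starRingEnd ℂ) (a i) * b i‖ * ‖∑ i, (starRingEnd ℂ) (a i) * b i‖ := by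
        rw [Complex.normSq_eq_norm_sq, sq]
    _ ≤ _ := h3

lemma rayleigh {M : Matrix (Fin 3) (Fin 3) ℂ} (hM : M.IsHermitian) (lm : ℝ)
    (hlm : ∀ i, hM.eigenvalues i ≤ lm) (v : Fin 3 → ℂ) :
    (star v ⬝ᵥ M *ᵥ v).re ≤ lm * ∑ i, Complex.normSq (v i) := by
  set U : Matrix (Fin 3) (Fin 3) ℂ := (hM.eigenvectorUnitary : Matrix (Fin 3) (Fin 3) ℂ) with hU
  set w : Fin 3 → ℂ := (star U) *ᵥ v with hw
  have hUU : U * star U = 1 := (Matrix.mem_unitaryGroup_iff).mp (hM.eigenvectorUnitary).2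
  have hsw : star w = star v ᵥ* U := by
    rw [hw, star_mulVec]; simp [Matrix.star_eq_conjTranspose]
  have key : star v ⬝ᵥ M *ᵥ v = ∑ i, (hM.eigenvalues i : ℂ) * (w i * (starRingEnd ℂ) (w i)) := by
    conv_lhs => rw [hM.spectral_theorem, Unitary.conjStarAlgAut_apply]
    rw [← Matrix.mulVec_mulVec, ← Matrix.mulVec_mulVec, dotProduct_mulVec, ← hsw]
    rw [dotProduct]
    refine Finset.sum_congr rfl fun i _ => ?_
    rw [Matrix.mulVec_diagonal]
    simp [mul_comm, mul_assoc, mul_left_comm, Pi.star_apply, RCLike.star_def, hw, hU]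
  have hnw : star w ⬝ᵥ w = star v ⬝ᵥ v := by
    rw [hsw, hw, ← dotProduct_mulVec, Matrix.mulVec_mulVec, hUU, Matrix.one_mulVec]
  have hnw' : ∑ i, Complex.normSq (w i) = ∑ i, Complex.normSq (v i) := by
    have := congrArg Complex.re hnw
    simpa [dotProduct, Pi.star_apply, RCLike.star_def, Complex.mul_conj,
      mul_comm] using this
  rw [key, Complex.re_sum]
  calc ∑ i, ((hM.eigenvalues i : ℂ) * (w i * (starRingEnd ℂ) (w i))).re
      = ∑ i, hM.eigenvalues i * Complex.normSq (w i) := by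
        refine Finset.sum_congr rfl fun i _ => ?_
        rw [Complex.mul_conj]
        norm_cast
    _ ≤ ∑ i, lm * Complex.normSq (w i) := by
        refine Finset.sum_le_sum fun i _ => ?_
        exact mul_le_mul_of_nonneg_right (hlm i) (Complex.normSq_nonneg _)
    _ = lm * ∑ i, Complex.normSq (w i) := by rw [Finset.mul_sum]
    _ = lm * ∑ i, Complex.normSq (v i) := by rw [hnw']

noncomputable def con1 (c : Fin 3 → Fin 3 → Fin 3 → ℂ) (v : Fin 3 → ℂ) (j k : Fin 3) : ℂ :=
  ∑ i : Fin 3, conj (v i) * c i j k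
noncomputable def con2 (c : Fin 3 → Fin 3 → Fin 3 → ℂ) (v : Fin 3 → ℂ) (i k : Fin 3) : ℂ :=
  ∑ j : Fin 3, conj (v j) * c i j k
noncomputable def con3 (c : Fin 3 → Fin 3 → Fin 3 → ℂ) (v : Fin 3 → ℂ) (i j : Fin 3) : ℂ :=
  ∑ k : Fin 3, conj (v k) * c i j k
noncomputable def gfun (c : Fin 3 → Fin 3 → Fin 3 → ℂ) (y z : Fin 3 → ℂ) (i : Fin 3) : ℂ :=
  ∑ j : Fin 3, ∑ k : Fin 3, conj (y j) * (conj (z k) * c i j k)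

lemma L1 (c : Fin 3 → Fin 3 → Fin 3 → ℂ) (v : Fin 3 → ℂ) :
    star v ⬝ᵥ (rho2 c) *ᵥ v = ∑ i : Fin 3, ∑ k : Fin 3, con2 c v i k * conj (con2 c v i k) := by
  simp only [dotProduct, Matrix.mulVec, rho2, con2, Matrix.of_apply, Pi.star_apply,
    RCLike.star_def, map_sum, map_add, _root_.map_mul, Complex.conj_conj, Fin.sum_univ_three]
  ring

lemma L2 (c : Fin 3 → Fin 3 → Fin 3 → ℂ) (v : Fin 3 → ℂ) :
    star v ⬝ᵥ (rho3 c) *ᵥ v = ∑ i : Fin 3, ∑ j : Fin 3, con3 c v i j * conj (con3 c v i j) := by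
  simp only [dotProduct, Matrix.mulVec, rho3, con3, Matrix.of_apply, Pi.star_apply,
    RCLike.star_def, map_sum, map_add, _root_.map_mul, Complex.conj_conj, Fin.sum_univ_three]
  ring

lemma L3 (c : Fin 3 → Fin 3 → Fin 3 → ℂ) (v : Fin 3 → ℂ) :
    star v ⬝ᵥ (rho1 c) *ᵥ v = ∑ j : Fin 3, ∑ k : Fin 3, con1 c v j k * conj (con1 c v j k) := by
  simp only [dotProduct, Matrix.mulVec, rho1, con1, Matrix.of_apply, Pi.star_apply,
    RCLike.star_def, map_sum, map_add, _root_.map_mul, Complex.conj_conj, Fin.sum_univ_three]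
  ring

lemma L4 (c : Fin 3 → Fin 3 → Fin 3 → ℂ) (y z : Fin 3 → ℂ) :
    ∑ p : Fin 3 × Fin 3, conj (y p.1 * z p.2) * con1 c (gfun c y z) p.1 p.2
      = ∑ i : Fin 3, gfun c y z i * conj (gfun c y z i) := by
  simp only [Fintype.sum_prod_type, con1, gfun, Pi.star_apply, RCLike.star_def, map_sum,
    map_add, _root_.map_mul, Complex.conj_conj, Fin.sum_univ_three]
  ring

lemma L5 (c : Fin 3 → Fin 3 → Fin 3 → ℂ) (y z : Fin 3 → ℂ) (i k : Fin 3) :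
    ∑ j : Fin 3, conj (y j) * (c i j k - z k * con3 c z i j)
      = con2 c y i k - z k * gfun c y z i := by
  simp only [con2, con3, gfun, map_sum, map_add, map_sub, _root_.map_mul, Complex.conj_conj,
    Fin.sum_univ_three]
  ring

lemma L6 (c : Fin 3 → Fin 3 → Fin 3 → ℂ) (y z : Fin 3 → ℂ) (i : Fin 3) :
    ∑ k : Fin 3, conj (z k) * con2 c y i k = gfun c y z i := by
  simp only [con2, gfun, map_sum, map_add, _root_.map_mul, Complex.conj_conj, Fin.sum_univ_three]
  ring

lemma sumsC {ι : Type*} [Fintype ι] (f : ι → ℂ) :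
    ∑ i, f i * conj (f i) = ((∑ i, Complex.normSq (f i) : ℝ) : ℂ) := by
  push_cast
  exact Finset.sum_congr rfl fun i _ => (Complex.mul_conj (f i))

lemma sub_proj (z : Fin 3 → ℂ) (hz : ∑ k : Fin 3, z k * conj (z k) = 1)
    {ι : Type*} [Fintype ι] (u : ι → Fin 3 → ℂ) (w : ι → ℂ)
    (hrel : ∀ p, ∑ k : Fin 3, conj (z k) * u p k = w p) :
    ∑ p, ∑ k : Fin 3, (u p k - z k * w p) * conj (u p k - z k * w p)
      = (∑ p, ∑ k : Fin 3, u p k * conj (u p k)) - ∑ p, w p * conj (w p) := by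
  rw [← Finset.sum_sub_distrib]
  refine Finset.sum_congr rfl fun p _ => ?_
  have h1 := hrel p
  have h2 : ∑ k : Fin 3, z k * conj (u p k) = conj (w p) := by
    have h := congrArg (starRingEnd ℂ) h1
    simpa [map_sum, _root_.map_mul, Complex.conj_conj] using h
  simp only [Fin.sum_univ_three] at h1 h2 hz ⊢
  simp only [map_sub, _root_.map_mul, Complex.conj_conj]
  linear_combination (- conj (w p)) * h1 - w p * h2 + (w p * conj (w p)) * hz

lemma sumsC2 (f : Fin 3 → Fin 3 → ℂ) :
    ∑ a : Fin 3, ∑ b : Fin 3, f a b * conj (f a b)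
      = ((∑ a : Fin 3, ∑ b : Fin 3, Complex.normSq (f a b) : ℝ) : ℂ) := by
  push_cast
  exact Finset.sum_congr rfl fun a _ => Finset.sum_congr rfl fun b _ => Complex.mul_conj _

lemma trace_eq_sum {M : Matrix (Fin 3) (Fin 3) ℂ} (hM : M.IsHermitian) :
    M.trace = ((∑ i, hM.eigenvalues i : ℝ) : ℂ) := by
  conv_lhs => rw [hM.spectral_theorem, Unitary.conjStarAlgAut_apply]
  rw [Matrix.trace_mul_cycle]
  rw [(Matrix.mem_unitaryGroup_iff').mp (hM.eigenvectorUnitary).2]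
  rw [Matrix.one_mul, Matrix.trace_diagonal]
  push_cast
  rfl

lemma spec_sum {M : Matrix (Fin 3) (Fin 3) ℂ} {l : Fin 3 → ℝ}
    (h : IsOrderedSpectrum M l) : M.trace = ((l 0 + l 1 + l 2 : ℝ) : ℂ) := by
  obtain ⟨-, hM, σ, hl⟩ := h
  rw [trace_eq_sum hM]
  congr 1
  rw [← Equiv.sum_comp σ hM.eigenvalues, Fin.sum_univ_three, ← hl 0, ← hl 1, ← hl 2]

lemma trace_rho1 (c : Fin 3 → Fin 3 → Fin 3 → ℂ)
    (hnsq : ∑ i : Fin 3, ∑ j : Fin 3, ∑ k : Fin 3, Complex.normSq (c i j k) = 1) :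
    (rho1 c).trace = 1 := by
  simp only [Matrix.trace, Matrix.diag, rho1, Matrix.of_apply, Complex.mul_conj]
  rw [show ∑ i : Fin 3, ∑ j : Fin 3, ∑ k : Fin 3, (Complex.normSq (c i j k) : ℂ)
    = ((∑ i : Fin 3, ∑ j : Fin 3, ∑ k : Fin 3, Complex.normSq (c i j k) : ℝ) : ℂ) by push_cast; rfl]
  rw [hnsq]; norm_num

lemma spec_sum_one {M : Matrix (Fin 3) (Fin 3) ℂ} {l : Fin 3 → ℝ}
    (h : IsOrderedSpectrum M l) (htr : M.trace = 1) : l 0 + l 1 + l 2 = 1 := by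
  have := spec_sum h
  rw [htr] at this
  exact_mod_cast this.symm

lemma trace_rho2 (c : Fin 3 → Fin 3 → Fin 3 → ℂ)
    (hnsq : ∑ i : Fin 3, ∑ j : Fin 3, ∑ k : Fin 3, Complex.normSq (c i j k) = 1) :
    (rho2 c).trace = 1 := by
  simp only [Matrix.trace, Matrix.diag, rho2, Matrix.of_apply, Complex.mul_conj]
  rw [show ∑ j : Fin 3, ∑ i : Fin 3, ∑ k : Fin 3, ((Complex.normSq (c i j k) : ℝ) : ℂ)
    = ((∑ j : Fin 3, ∑ i : Fin 3, ∑ k : Fin 3, Complex.normSq (c i j k) : ℝ) : ℂ) by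
      push_cast; rfl]
  rw [show ∑ j : Fin 3, ∑ i : Fin 3, ∑ k : Fin 3, Complex.normSq (c i j k) = 1 by
    simp only [Fin.sum_univ_three] at hnsq ⊢; linarith]
  norm_num

lemma trace_rho3 (c : Fin 3 → Fin 3 → Fin 3 → ℂ)
    (hnsq : ∑ i : Fin 3, ∑ j : Fin 3, ∑ k : Fin 3, Complex.normSq (c i j k) = 1) :
    (rho3 c).trace = 1 := by
  simp only [Matrix.trace, Matrix.diag, rho3, Matrix.of_apply, Complex.mul_conj]
  rw [show ∑ k : Fin 3, ∑ i : Fin 3, ∑ j : Fin 3, ((Complex.normSq (c i j k) : ℝ) : ℂ)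
    = ((∑ k : Fin 3, ∑ i : Fin 3, ∑ j : Fin 3, Complex.normSq (c i j k) : ℝ) : ℂ) by
      push_cast; rfl]
  rw [show ∑ k : Fin 3, ∑ i : Fin 3, ∑ j : Fin 3, Complex.normSq (c i j k) = 1 by
    simp only [Fin.sum_univ_three] at hnsq ⊢; linarith]
  norm_num

-- unit eigenvector facts
lemma eig_top {M : Matrix (Fin 3) (Fin 3) ℂ} {l : Fin 3 → ℝ}
    (h : IsOrderedSpectrum M l) :
    ∃ v : Fin 3 → ℂ, (∑ i, Complex.normSq (v i) = 1) ∧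
      (M *ᵥ v = fun i => (l 2 : ℂ) * v i) := by
  obtain ⟨-, hM, σ, hl⟩ := h
  refine ⟨⇑(hM.eigenvectorBasis (σ 2)), ?_, ?_⟩
  · have h1 := hM.eigenvectorBasis.orthonormal.1 (σ 2)
    have h2 := norm_sq_eucl (hM.eigenvectorBasis (σ 2))
    rw [h1] at h2
    simpa using h2.symm
  · have h3 := hM.mulVec_eigenvectorBasis (σ 2)
    rw [h3]
    funext i
    simp only [Pi.smul_apply, hl 2]
    rw [Complex.real_smul]

lemma key (c : Fin 3 → Fin 3 → Fin 3 → ℂ)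
    (hnsq : ∑ i : Fin 3, ∑ j : Fin 3, ∑ k : Fin 3, Complex.normSq (c i j k) = 1)
    (p q r : Fin 3 → ℝ)
    (h1 : IsOrderedSpectrum (rho1 c) p)
    (h2 : IsOrderedSpectrum (rho2 c) q)
    (h3 : IsOrderedSpectrum (rho3 c) r) :
    q 2 + r 2 ≤ 1 + p 2 := by
  obtain ⟨y, hy_norm, hyeig⟩ := eig_top h2
  obtain ⟨z, hz_norm, hzeig⟩ := eig_top h3
  have hy_normC : ∑ j : Fin 3, y j * conj (y j) = 1 := by
    rw [sumsC, hy_norm]; norm_num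
  have hz_normC : ∑ k : Fin 3, z k * conj (z k) = 1 := by
    rw [sumsC, hz_norm]; norm_num
  set g : Fin 3 → ℂ := gfun c y z with hgdef
  set G : ℝ := ∑ i : Fin 3, Complex.normSq (g i) with hGdef
  set D : ℝ := ∑ i : Fin 3, ∑ k : Fin 3, Complex.normSq (con2 c y i k) with hDdef
  set E : ℝ := ∑ i : Fin 3, ∑ j : Fin 3, Complex.normSq (con3 c z i j) with hEdef
  have hDC : ((q 2 : ℝ) : ℂ) = ((D : ℝ) : ℂ) := by
    rw [hDdef, ← sumsC2 (fun i k => con2 c y i k)]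
    rw [← L1 c y, hyeig]
    simp only [dotProduct, Pi.star_apply, RCLike.star_def]
    rw [show ∑ j : Fin 3, conj (y j) * ((q 2 : ℂ) * y j)
      = (q 2 : ℂ) * ∑ j : Fin 3, y j * conj (y j) by rw [Finset.mul_sum]; congr 1; funext j; ring]
    rw [hy_normC, mul_one]
  have hEC : ((r 2 : ℝ) : ℂ) = ((E : ℝ) : ℂ) := by
    rw [hEdef, ← sumsC2 (fun i j => con3 c z i j)]
    rw [← L2 c z, hzeig]
    simp only [dotProduct, Pi.star_apply, RCLike.star_def]
    rw [show ∑ k : Fin 3, conj (z k) * ((r 2 : ℂ) * z k)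
      = (r 2 : ℂ) * ∑ k : Fin 3, z k * conj (z k) by rw [Finset.mul_sum]; congr 1; funext k; ring]
    rw [hz_normC, mul_one]
  have hq2 : q 2 = D := by exact_mod_cast hDC
  have hr2 : r 2 = E := by exact_mod_cast hEC
  -- trace facts
  have hp_sum : p 0 + p 1 + p 2 = 1 := spec_sum_one h1 (trace_rho1 c hnsq)
  have hp_mono : Monotone p := h1.1
  have hp_third : (1 : ℝ)/3 ≤ p 2 := by
    have h01 : p 0 ≤ p 2 := hp_mono (by decide)
    have h12 : p 1 ≤ p 2 := hp_mono (by decide)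
    linarith
  have hG0 : 0 ≤ G := by
    rw [hGdef]
    exact Finset.sum_nonneg fun i _ => Complex.normSq_nonneg _
  -- G ≤ p 2
  have hGle : G ≤ p 2 := by
    obtain ⟨-, hM1, σ1, hl1⟩ := h1
    have hlm : ∀ i, hM1.eigenvalues i ≤ p 2 := by
      intro i
      have h : hM1.eigenvalues i = p (σ1.symm i) := by
        rw [hl1 (σ1.symm i), Equiv.apply_symm_apply]
      rw [h]
      exact hp_mono (Fin.le_last _)
    have hray := rayleigh hM1 (p 2) hlm g
    set R : ℝ := ∑ j : Fin 3, ∑ k : Fin 3, Complex.normSq (con1 c g j k) with hRdef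
    have hRfc : star g ⬝ᵥ (rho1 c) *ᵥ g = ((R : ℝ) : ℂ) := by
      rw [L3, hRdef, sumsC2 (fun j k => con1 c g j k)]
    have hRle : R ≤ p 2 * G := by
      rw [hRfc] at hray
      simpa [hGdef] using hray
    have hGR : G ^ 2 ≤ R := by
      have hcs := cs_sum (fun pq : Fin 3 × Fin 3 => y pq.1 * z pq.2)
        (fun pq : Fin 3 × Fin 3 => con1 c g pq.1 pq.2)
      have hinner : ∑ pq : Fin 3 × Fin 3, conj (y pq.1 * z pq.2) * con1 c g pq.1 pq.2
          = ((G : ℝ) : ℂ) := by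
        rw [hgdef, L4 c y z, hGdef, ← sumsC]
      have hyz1 : ∑ pq : Fin 3 × Fin 3, Complex.normSq (y pq.1 * z pq.2) = 1 := by
        rw [Fintype.sum_prod_type]
        simp only [Complex.normSq_mul]
        rw [show ∑ j : Fin 3, ∑ k : Fin 3, Complex.normSq (y j) * Complex.normSq (z k)
          = (∑ j : Fin 3, Complex.normSq (y j)) * (∑ k : Fin 3, Complex.normSq (z k)) by
            rw [Finset.sum_mul_sum]]
        rw [hy_norm, hz_norm]; norm_num
      have hbR : ∑ pq : Fin 3 × Fin 3, Complex.normSq (con1 c g pq.1 pq.2) = R := by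
        rw [hRdef, Fintype.sum_prod_type]
      rw [hinner, hyz1, hbR, one_mul] at hcs
      calc G ^ 2 = Complex.normSq ((G : ℝ) : ℂ) := by rw [Complex.normSq_ofReal]; ring
        _ ≤ R := hcs
    rcases eq_or_lt_of_le hG0 with hG | hG
    · linarith
    · have h2' : G * G ≤ p 2 * G := by nlinarith
      exact le_of_mul_le_mul_right h2' hG
  -- main Cauchy-Schwarz chain: D - G ≤ 1 - E
  have hmain : D - G ≤ 1 - E := by
    have hrel1 : ∀ i : Fin 3, ∑ k : Fin 3, conj (z k) * con2 c y i k = g i := by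
      intro i; rw [hgdef]; exact L6 c y z i
    have hDG : ((D - G : ℝ) : ℂ) = ∑ i : Fin 3, ∑ k : Fin 3,
        (con2 c y i k - z k * g i) * conj (con2 c y i k - z k * g i) := by
      rw [sub_proj z hz_normC (fun i k => con2 c y i k) g hrel1]
      rw [sumsC2 (fun i k => con2 c y i k), sumsC g, ← hDdef, ← hGdef]
      push_cast; ring
    have hDGreal : D - G = ∑ i : Fin 3, ∑ k : Fin 3,
        Complex.normSq (con2 c y i k - z k * g i) := by
      have := hDG
      rw [sumsC2 (fun i k => con2 c y i k - z k * g i)] at this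
      exact_mod_cast this
    have hrel2 : ∀ pq : Fin 3 × Fin 3,
        ∑ k : Fin 3, conj (z k) * c pq.1 pq.2 k = con3 c z pq.1 pq.2 := fun pq => rfl
    have hNE : ((1 - E : ℝ) : ℂ) = ∑ pq : Fin 3 × Fin 3, ∑ k : Fin 3,
        (c pq.1 pq.2 k - z k * con3 c z pq.1 pq.2) *
          conj (c pq.1 pq.2 k - z k * con3 c z pq.1 pq.2) := by
      have hsp := sub_proj z hz_normC (fun pq : Fin 3 × Fin 3 => fun k => c pq.1 pq.2 k)
        (fun pq => con3 c z pq.1 pq.2) hrel2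
      beta_reduce at hsp
      rw [hsp]
      have e1 : ∑ pq : Fin 3 × Fin 3, ∑ k : Fin 3, c pq.1 pq.2 k * conj (c pq.1 pq.2 k)
          = ((1 : ℝ) : ℂ) := by
        rw [Fintype.sum_prod_type]
        rw [show ∑ i : Fin 3, ∑ j : Fin 3, ∑ k : Fin 3, c i j k * conj (c i j k)
          = ((∑ i : Fin 3, ∑ j : Fin 3, ∑ k : Fin 3, Complex.normSq (c i j k) : ℝ) : ℂ) by
            push_cast
            exact Finset.sum_congr rfl fun i _ => Finset.sum_congr rfl fun j _ =>
              Finset.sum_congr rfl fun k _ => Complex.mul_conj _]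
        rw [hnsq]
      have e2 : ∑ pq : Fin 3 × Fin 3, con3 c z pq.1 pq.2 * conj (con3 c z pq.1 pq.2)
          = ((E : ℝ) : ℂ) := by
        rw [Fintype.sum_prod_type, sumsC2 (fun i j => con3 c z i j), ← hEdef]
      rw [e1, e2]
      push_cast; ring
    have hNEreal : 1 - E = ∑ pq : Fin 3 × Fin 3, ∑ k : Fin 3,
        Complex.normSq (c pq.1 pq.2 k - z k * con3 c z pq.1 pq.2) := by
      have := hNE
      rw [show ∑ pq : Fin 3 × Fin 3, ∑ k : Fin 3,
          (c pq.1 pq.2 k - z k * con3 c z pq.1 pq.2) *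
            conj (c pq.1 pq.2 k - z k * con3 c z pq.1 pq.2)
          = ((∑ pq : Fin 3 × Fin 3, ∑ k : Fin 3,
              Complex.normSq (c pq.1 pq.2 k - z k * con3 c z pq.1 pq.2) : ℝ) : ℂ) by
        push_cast
        exact Finset.sum_congr rfl fun pq _ => Finset.sum_congr rfl fun k _ =>
          Complex.mul_conj _] at this
      exact_mod_cast this
    -- pointwise Cauchy-Schwarz
    have hpt : ∀ i k : Fin 3, Complex.normSq (con2 c y i k - z k * g i)
        ≤ ∑ j : Fin 3, Complex.normSq (c i j k - z k * con3 c z i j) := by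
      intro i k
      have h5 : con2 c y i k - z k * g i
          = ∑ j : Fin 3, conj (y j) * (c i j k - z k * con3 c z i j) := by
        rw [hgdef]; exact (L5 c y z i k).symm
      rw [h5]
      calc Complex.normSq (∑ j : Fin 3, conj (y j) * (c i j k - z k * con3 c z i j))
          ≤ (∑ j : Fin 3, Complex.normSq (y j)) *
            (∑ j : Fin 3, Complex.normSq (c i j k - z k * con3 c z i j)) := cs_sum _ _
        _ = ∑ j : Fin 3, Complex.normSq (c i j k - z k * con3 c z i j) := by
            rw [hy_norm, one_mul]
    calc D - G = ∑ i : Fin 3, ∑ k : Fin 3, Complex.normSq (con2 c y i k - z k * g i) := hDGreal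
      _ ≤ ∑ i : Fin 3, ∑ k : Fin 3, ∑ j : Fin 3,
            Complex.normSq (c i j k - z k * con3 c z i j) := by
          refine Finset.sum_le_sum fun i _ => Finset.sum_le_sum fun k _ => hpt i k
      _ = ∑ pq : Fin 3 × Fin 3, ∑ k : Fin 3,
            Complex.normSq (c pq.1 pq.2 k - z k * con3 c z pq.1 pq.2) := by
          rw [Fintype.sum_prod_type]
          refine Finset.sum_congr rfl fun i _ => ?_
          rw [Finset.sum_comm]
      _ = 1 - E := hNEreal.symm
  linarith

lemma P1 (c : Fin 3 → Fin 3 → Fin 3 → ℂ) : rho1 (fun i j k => c j i k) = rho2 c := rfl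
lemma P2 (c : Fin 3 → Fin 3 → Fin 3 → ℂ) : rho2 (fun i j k => c j i k) = rho1 c := rfl
lemma P3 (c : Fin 3 → Fin 3 → Fin 3 → ℂ) : rho3 (fun i j k => c j i k) = rho3 c := by
  ext a b
  simp only [rho3, Matrix.of_apply]
  exact Finset.sum_comm
lemma Q1 (c : Fin 3 → Fin 3 → Fin 3 → ℂ) : rho1 (fun i j k => c k j i) = rho3 c := by
  ext a b
  simp only [rho1, rho3, Matrix.of_apply]
  exact Finset.sum_comm
lemma Q2 (c : Fin 3 → Fin 3 → Fin 3 → ℂ) : rho2 (fun i j k => c k j i) = rho2 c := by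
  ext a b
  simp only [rho2, Matrix.of_apply]
  exact Finset.sum_comm
lemma Q3 (c : Fin 3 → Fin 3 → Fin 3 → ℂ) : rho3 (fun i j k => c k j i) = rho1 c := by
  ext a b
  simp only [rho3, rho1, Matrix.of_apply]
  exact Finset.sum_comm

theorem three_qutrit_ineq1 (c : Fin 3 → Fin 3 → Fin 3 → ℂ)
    (hnorm : ∑ i : Fin 3, ∑ j : Fin 3, ∑ k : Fin 3, ‖c i j k‖ ^ 2 = 1)
    (l : Fin 3 → Fin 3 → ℝ)
    (h1 : IsOrderedSpectrum (rho1 c) (l 0))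
    (h2 : IsOrderedSpectrum (rho2 c) (l 1))
    (h3 : IsOrderedSpectrum (rho3 c) (l 2)) :
    ∀ a b c' : Fin 3, a ≠ b → a ≠ c' → b ≠ c' →
      l a 1 + l a 0 ≤ l b 1 + l b 0 + l c' 1 + l c' 0 := by
  have hnsq : ∑ i : Fin 3, ∑ j : Fin 3, ∑ k : Fin 3, Complex.normSq (c i j k) = 1 := by
    rw [← hnorm]
    refine Finset.sum_congr rfl fun i _ => Finset.sum_congr rfl fun j _ =>
      Finset.sum_congr rfl fun k _ => ?_
    rw [Complex.normSq_eq_norm_sq]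
  have hnsq' : ∑ i : Fin 3, ∑ j : Fin 3, ∑ k : Fin 3,
      Complex.normSq ((fun i j k => c j i k) i j k) = 1 := by
    simp only [Fin.sum_univ_three] at hnsq ⊢; linarith
  have hnsq'' : ∑ i : Fin 3, ∑ j : Fin 3, ∑ k : Fin 3,
      Complex.normSq ((fun i j k => c k j i) i j k) = 1 := by
    simp only [Fin.sum_univ_three] at hnsq ⊢; linarith
  have K1 : l 1 2 + l 2 2 ≤ 1 + l 0 2 := key c hnsq (l 0) (l 1) (l 2) h1 h2 h3
  have K2 : l 0 2 + l 2 2 ≤ 1 + l 1 2 := by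
    refine key (fun i j k => c j i k) hnsq' (l 1) (l 0) (l 2) ?_ ?_ ?_
    · rw [P1]; exact h2
    · rw [P2]; exact h1
    · rw [P3]; exact h3
  have K3 : l 1 2 + l 0 2 ≤ 1 + l 2 2 := by
    refine key (fun i j k => c k j i) hnsq'' (l 2) (l 1) (l 0) ?_ ?_ ?_
    · rw [Q1]; exact h3
    · rw [Q2]; exact h2
    · rw [Q3]; exact h1
  have T0 : l 0 0 + l 0 1 + l 0 2 = 1 := spec_sum_one h1 (trace_rho1 c hnsq)
  have T1 : l 1 0 + l 1 1 + l 1 2 = 1 := spec_sum_one h2 (trace_rho2 c hnsq)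
  have T2 : l 2 0 + l 2 1 + l 2 2 = 1 := spec_sum_one h3 (trace_rho3 c hnsq)
  intro a b c' hab hac hbc
  fin_cases a <;> fin_cases b <;> fin_cases c' <;>
    simp only [show ((⟨0, by omega⟩ : Fin 3)) = 0 from rfl,
      show ((⟨1, by omega⟩ : Fin 3)) = 1 from rfl,
      show ((⟨2, by omega⟩ : Fin 3)) = 2 from rfl] at hab hac hbc ⊢ <;>
    first
      | exact absurd rfl hab
      | exact absurd rfl hac
      | exact absurd rfl hbc
      | linarith
end

section
/- For any pure three-qutrit state, with λ_1^{(a)} ≤ λ_2^{(a)} ≤ λ_3^{(a)} the increasingly ordered eigenvalues of the a-th one-particle reduced density matrix, the inequality λ_3^{(a)} + λ_1^{(a)} ≤ λ_2^{(b)} + λ_1^{(b)} + λ_3^{(c)} + λ_1^{(c)} holds for every permutation (a,b,c) of (1,2,3). -/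
open scoped BigOperators

open Finset Complex Matrix
open scoped ComplexOrder
set_option maxHeartbeats 1600000

namespace ThreeQutritAux

local notation "conj'" => starRingEnd ℂ




/-- sum of normSq as real part of complex sum -/
lemma sum_ns {ι : Type*} [Fintype ι] (x : ι → ℂ) :
    ∑ i, Complex.normSq (x i) = (∑ i, x i * conj' (x i)).re := by
  have h : ∑ i, x i * conj' (x i) = ((∑ i, Complex.normSq (x i) : ℝ) : ℂ) := by
    rw [Complex.ofReal_sum]; exact Finset.sum_congr rfl fun i _ => Complex.mul_conj _
  rw [h, Complex.ofReal_re]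

lemma proj_residual_c {ι : Type*} [Fintype ι] (u z : ι → ℂ)
    (hu : ∑ i, conj' (u i) * u i = 1) :
    ∑ i, (z i - u i * (∑ m, conj' (u m) * z m)) * conj' (z i - u i * (∑ m, conj' (u m) * z m))
      = ∑ i, z i * conj' (z i)
        - (∑ m, conj' (u m) * z m) * conj' (∑ m, conj' (u m) * z m) := by
  set t := ∑ m, conj' (u m) * z m with ht
  have hzu : ∑ i, z i * conj' (u i) = t := by rw [ht]; exact Finset.sum_congr rfl (fun i _ => mul_comm _ _)
  have hconj : ∑ i, u i * conj' (z i) = conj' t := by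
    rw [ht, map_sum]; exact Finset.sum_congr rfl (fun i _ => by simp [mul_comm])
  have huu : ∑ i, u i * conj' (u i) = 1 := by
    rw [← hu]; exact Finset.sum_congr rfl (fun i _ => mul_comm _ _)
  calc ∑ i, (z i - u i * t) * conj' (z i - u i * t)
      = ∑ i, (z i * conj' (z i) - (z i * conj' (u i)) * conj' t
          - t * (u i * conj' (z i)) + (t * conj' t) * (u i * conj' (u i))) := by
        apply Finset.sum_congr rfl; intro i _
        simp only [_root_.map_sub, _root_.map_mul]
        ring
    _ = (∑ i, z i * conj' (z i)) - (∑ i, z i * conj' (u i)) * conj' t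
          - t * (∑ i, u i * conj' (z i)) + (t * conj' t) * (∑ i, u i * conj' (u i)) := by
        simp [Finset.sum_add_distrib, Finset.sum_sub_distrib, ← Finset.sum_mul, ← Finset.mul_sum]
    _ = ∑ i, z i * conj' (z i) - t * conj' t := by
        rw [hzu, hconj, huu]; ring

lemma proj_residual {ι : Type*} [Fintype ι] (u z : ι → ℂ)
    (hu : ∑ i, conj' (u i) * u i = 1) :
    ∑ i, Complex.normSq (z i - u i * (∑ m, conj' (u m) * z m))
      = ∑ i, Complex.normSq (z i) - Complex.normSq (∑ m, conj' (u m) * z m) := by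
  have h := congrArg Complex.re (proj_residual_c u z hu)
  rw [Complex.sub_re] at h
  rw [sum_ns (fun i => z i - u i * (∑ m, conj' (u m) * z m)), h, sum_ns z]
  congr 1
  rw [Complex.mul_conj, Complex.ofReal_re]

lemma bessel {ι : Type*} [Fintype ι] (u z : ι → ℂ)
    (hu : ∑ i, conj' (u i) * u i = 1) :
    Complex.normSq (∑ m, conj' (u m) * z m) ≤ ∑ i, Complex.normSq (z i) := by
  have h := proj_residual u z hu
  have h2 : 0 ≤ ∑ i, Complex.normSq (z i - u i * (∑ m, conj' (u m) * z m)) :=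
    Finset.sum_nonneg (fun i _ => Complex.normSq_nonneg _)
  linarith

lemma exists_unit_orth (t2 t3 : ℂ) :
    ∃ α β : ℂ, conj' α * α + conj' β * β = 1 ∧ conj' α * t2 + conj' β * t3 = 0 := by
  by_cases h : t2 = 0 ∧ t3 = 0
  · exact ⟨1, 0, by simp, by simp [h.1, h.2]⟩
  · have hpos : 0 < Complex.normSq t2 + Complex.normSq t3 := by
      rcases not_and_or.mp h with h' | h'
      · have := Complex.normSq_pos.mpr h'
        have := Complex.normSq_nonneg t3
        linarith
      · have := Complex.normSq_pos.mpr h'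
        have := Complex.normSq_nonneg t2
        linarith
    set s : ℝ := Real.sqrt (Complex.normSq t2 + Complex.normSq t3) with hs
    have hs0 : 0 < s := Real.sqrt_pos.mpr hpos
    have hsne : (s : ℂ) ≠ 0 := by exact_mod_cast hs0.ne'
    have hssq : (s : ℂ) * (s : ℂ) = (Complex.normSq t2 + Complex.normSq t3 : ℝ) := by
      rw [← Complex.ofReal_mul, Real.mul_self_sqrt hpos.le]
    refine ⟨conj' t3 / s, -(conj' t2 / s), ?_, ?_⟩
    · have key : conj' t3 * t3 + conj' t2 * t2 = (s : ℂ) * s := by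
        rw [hssq, mul_comm (conj' t3), mul_comm (conj' t2), Complex.mul_conj, Complex.mul_conj]
        push_cast; ring
      simp only [map_div₀, map_neg, Complex.conj_conj, Complex.conj_ofReal]
      field_simp
      linear_combination key
    · simp only [_root_.map_div₀, _root_.map_neg, Complex.conj_conj, Complex.conj_ofReal]
      ring

lemma onb_complete (B : OrthonormalBasis (Fin 3) ℂ (EuclideanSpace ℂ (Fin 3)))
    (x : Fin 3 → ℂ) (i : Fin 3) :
    x i = ∑ m, (∑ i', conj' (B m i') * x i') * B m i := by
  have h := B.sum_repr' (WithLp.toLp 2 x)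
  have h2 := congrFun (congrArg (fun (y : EuclideanSpace ℂ (Fin 3)) => (y : Fin 3 → ℂ)) h) i
  simp only [PiLp.inner_apply, RCLike.inner_apply, WithLp.ofLp_toLp] at h2
  rw [← h2]
  rw [Fin.sum_univ_three, Fin.sum_univ_three]
  simp [PiLp.add_apply, PiLp.smul_apply, smul_eq_mul, Fin.sum_univ_three, mul_comm]

lemma quad2 (c : Fin 3 → Fin 3 → Fin 3 → ℂ) (x : Fin 3 → ℂ) :
    ∑ i : Fin 3, ∑ k : Fin 3, ((∑ j, conj' (x j) * c i j k) * conj' (∑ j, conj' (x j) * c i j k))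
      = ∑ j, conj' (x j) * (∑ j', rho2 c j j' * x j') := by
  simp only [rho2, Matrix.of_apply, map_sum, _root_.map_mul, Complex.conj_conj]
  simp only [Fin.sum_univ_three]
  ring

lemma quad3 (c : Fin 3 → Fin 3 → Fin 3 → ℂ) (x : Fin 3 → ℂ) :
    ∑ i : Fin 3, ∑ j : Fin 3, ((∑ k, conj' (x k) * c i j k) * conj' (∑ k, conj' (x k) * c i j k))
      = ∑ k, conj' (x k) * (∑ k', rho3 c k k' * x k') := by
  simp only [rho3, Matrix.of_apply, map_sum, _root_.map_mul, Complex.conj_conj]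
  simp only [Fin.sum_univ_three]
  ring

lemma quadG (c : Fin 3 → Fin 3 → Fin 3 → ℂ) (x : Fin 3 → ℂ) :
    ∑ j : Fin 3, ∑ k : Fin 3, ((∑ i, conj' (c i j k) * x i) * conj' (∑ i, conj' (c i j k) * x i))
      = ∑ i, conj' (x i) * (∑ i', rho1 c i i' * x i') := by
  simp only [rho1, Matrix.of_apply, map_sum, _root_.map_mul, Complex.conj_conj]
  simp only [Fin.sum_univ_three]
  ring


lemma key_ineq (v w : Fin 3 → ℂ) (cc : Fin 3 → Fin 3 → ℂ)
    (hv : ∑ j, conj' (v j) * v j = 1) (hw : ∑ k, conj' (w k) * w k = 1) :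
    (∑ k, Complex.normSq (∑ j, conj' (v j) * cc j k))
      + (∑ j, Complex.normSq (∑ k, conj' (w k) * cc j k))
      ≤ (∑ j, ∑ k, Complex.normSq (cc j k))
        + Complex.normSq (∑ j, ∑ k, conj' (v j) * (conj' (w k) * cc j k)) := by
  set d : Fin 3 → ℂ := fun k => ∑ j, conj' (v j) * cc j k with hd
  set e : Fin 3 → ℂ := fun j => ∑ k, conj' (w k) * cc j k with he
  set A : ℂ := ∑ j, conj' (v j) * e j with hA
  have hAeq : (∑ j, ∑ k, conj' (v j) * (conj' (w k) * cc j k)) = A := by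
    rw [hA]
    exact Finset.sum_congr rfl fun j _ => by rw [Finset.mul_sum]
  rw [hAeq]
  -- step 1 : per k residual
  have step1 : ∀ k, ∑ j, Complex.normSq (cc j k - v j * d k)
      = (∑ j, Complex.normSq (cc j k)) - Complex.normSq (d k) := fun k =>
    proj_residual v (fun j => cc j k) hv
  -- step 2
  have step2 : ∑ j, Complex.normSq (e j - v j * A)
      = (∑ j, Complex.normSq (e j)) - Complex.normSq A :=
    proj_residual v e hv
  -- step 3
  have step3 : ∀ j, e j - v j * A = ∑ k, conj' (w k) * (cc j k - v j * d k) := by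
    intro j
    have hswap : ∑ k, conj' (w k) * d k = A := by
      rw [hA, hd, he]
      simp only [Finset.mul_sum]
      rw [Finset.sum_comm]
      exact Finset.sum_congr rfl fun j' _ => Finset.sum_congr rfl fun k _ => by ring
    calc e j - v j * A = (∑ k, conj' (w k) * cc j k) - v j * ∑ k, conj' (w k) * d k := by
          rw [hswap, he]
      _ = ∑ k, conj' (w k) * (cc j k - v j * d k) := by
          rw [Finset.mul_sum, ← Finset.sum_sub_distrib]
          exact Finset.sum_congr rfl fun k _ => by ring
  -- step 4: bessel per j
  have step4 : ∀ j, Complex.normSq (e j - v j * A)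
      ≤ ∑ k, Complex.normSq (cc j k - v j * d k) := by
    intro j
    rw [step3 j]
    exact bessel w (fun k => cc j k - v j * d k) hw
  have main : (∑ j, Complex.normSq (e j)) - Complex.normSq A
      ≤ (∑ j, ∑ k, Complex.normSq (cc j k)) - ∑ k, Complex.normSq (d k) := by
    calc (∑ j, Complex.normSq (e j)) - Complex.normSq A
        = ∑ j, Complex.normSq (e j - v j * A) := step2.symm
      _ ≤ ∑ j, ∑ k, Complex.normSq (cc j k - v j * d k) :=
          Finset.sum_le_sum fun j _ => step4 j
      _ = ∑ k, ∑ j, Complex.normSq (cc j k - v j * d k) := Finset.sum_comm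
      _ = ∑ k, ((∑ j, Complex.normSq (cc j k)) - Complex.normSq (d k)) :=
          Finset.sum_congr rfl fun k _ => step1 k
      _ = (∑ k, ∑ j, Complex.normSq (cc j k)) - ∑ k, Complex.normSq (d k) := by
          rw [Finset.sum_sub_distrib]
      _ = (∑ j, ∑ k, Complex.normSq (cc j k)) - ∑ k, Complex.normSq (d k) := by
          rw [Finset.sum_comm]
  linarith

lemma sum_ns2 (x : Fin 3 → Fin 3 → ℂ) :
    ∑ i : Fin 3, ∑ k : Fin 3, Complex.normSq (x i k)
      = (∑ i : Fin 3, ∑ k : Fin 3, x i k * conj' (x i k)).re := by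
  rw [Complex.re_sum]
  exact Finset.sum_congr rfl fun i _ => sum_ns _

lemma onb_sum (B : OrthonormalBasis (Fin 3) ℂ (EuclideanSpace ℂ (Fin 3))) (m m' : Fin 3) :
    ∑ i, conj' (B m i) * B m' i = if m = m' then 1 else 0 := by
  have h := orthonormal_iff_ite.mp B.orthonormal m m'
  simpa [PiLp.inner_apply, RCLike.inner_apply, mul_comm] using h

lemma eig_pointwise' {M : Matrix (Fin 3) (Fin 3) ℂ} (hM : M.IsHermitian) (m : Fin 3) :
    ∀ i, ∑ i', M i i' * hM.eigenvectorBasis m i' = (hM.eigenvalues m : ℂ) * hM.eigenvectorBasis m i := by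
  intro i
  have h := congrFun (hM.mulVec_eigenvectorBasis m) i
  simpa [Matrix.mulVec, dotProduct, Complex.real_smul] using h

lemma trace_eq_sum_eig {M : Matrix (Fin 3) (Fin 3) ℂ} (hM : M.IsHermitian) :
    M.trace = ∑ m, (hM.eigenvalues m : ℂ) := by
  conv_lhs => rw [hM.spectral_theorem, Unitary.conjStarAlgAut_apply]
  rw [Matrix.trace_mul_comm, ← mul_assoc]
  have h : (star (hM.eigenvectorUnitary : Matrix (Fin 3) (Fin 3) ℂ))
      * (hM.eigenvectorUnitary : Matrix (Fin 3) (Fin 3) ℂ) = 1 :=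
    Unitary.coe_star_mul_self _
  rw [h, one_mul, Matrix.trace_diagonal]
  simp

lemma core (c : Fin 3 → Fin 3 → Fin 3 → ℂ)
    (hnorm : ∑ i : Fin 3, ∑ j : Fin 3, ∑ k : Fin 3, ‖c i j k‖ ^ 2 = 1)
    (f g h : Fin 3 → ℝ)
    (h1 : IsOrderedSpectrum (rho1 c) f)
    (h2 : IsOrderedSpectrum (rho2 c) g)
    (h3 : IsOrderedSpectrum (rho3 c) h) :
    g 2 + h 1 ≤ 1 + f 1 := by
  obtain ⟨mf, H1, σ1, hf⟩ := h1
  obtain ⟨mg, H2, σ2, hg⟩ := h2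
  obtain ⟨mh, H3, σ3, hh⟩ := h3
  have hnorm' : ∑ i : Fin 3, ∑ j : Fin 3, ∑ k : Fin 3, Complex.normSq (c i j k) = 1 := by
    simpa [Complex.sq_norm] using hnorm
  set u : Fin 3 → ℂ := ⇑(H1.eigenvectorBasis (σ1 2)) with hu_def
  set v : Fin 3 → ℂ := ⇑(H2.eigenvectorBasis (σ2 2)) with hv_def
  set w₁ : Fin 3 → ℂ := ⇑(H3.eigenvectorBasis (σ3 1)) with hw1_def
  set w₂ : Fin 3 → ℂ := ⇑(H3.eigenvectorBasis (σ3 2)) with hw2_def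
  have hv_unit : ∑ j, conj' (v j) * v j = 1 := by
    simpa using onb_sum (H2.eigenvectorBasis) (σ2 2) (σ2 2)
  have hw11 : ∑ k, conj' (w₁ k) * w₁ k = 1 := by
    simpa using onb_sum (H3.eigenvectorBasis) (σ3 1) (σ3 1)
  have hw22 : ∑ k, conj' (w₂ k) * w₂ k = 1 := by
    simpa using onb_sum (H3.eigenvectorBasis) (σ3 2) (σ3 2)
  have hne : σ3 1 ≠ σ3 2 := fun hcon => by
    have := σ3.injective hcon
    exact absurd this (by decide)
  have hw12 : ∑ k, conj' (w₁ k) * w₂ k = 0 := by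
    simpa [hne] using onb_sum (H3.eigenvectorBasis) (σ3 1) (σ3 2)
  have hw21 : ∑ k, conj' (w₂ k) * w₁ k = 0 := by
    simpa [hne.symm] using onb_sum (H3.eigenvectorBasis) (σ3 2) (σ3 1)
  -- the two amplitude vectors and choice of combination
  obtain ⟨α, β, hab, hor⟩ := exists_unit_orth
    (∑ i, conj' (u i) * (∑ j, ∑ k, conj' (v j) * (conj' (w₁ k) * c i j k)))
    (∑ i, conj' (u i) * (∑ j, ∑ k, conj' (v j) * (conj' (w₂ k) * c i j k)))
  set w : Fin 3 → ℂ := fun k => α * w₁ k + β * w₂ k with hw_def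
  set Aw : Fin 3 → ℂ := fun i => ∑ j, ∑ k, conj' (v j) * (conj' (w k) * c i j k) with hAw_def
  have hw_unit : ∑ k, conj' (w k) * w k = 1 := by
    have expand : ∀ k, conj' (w k) * w k
        = (conj' α * α) * (conj' (w₁ k) * w₁ k) + (conj' α * β) * (conj' (w₁ k) * w₂ k)
          + (conj' β * α) * (conj' (w₂ k) * w₁ k) + (conj' β * β) * (conj' (w₂ k) * w₂ k) := by
      intro k; simp only [hw_def, _root_.map_add, _root_.map_mul]; ring
    calc ∑ k, conj' (w k) * w k
        = (conj' α * α) * (∑ k, conj' (w₁ k) * w₁ k) + (conj' α * β) * (∑ k, conj' (w₁ k) * w₂ k)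
          + (conj' β * α) * (∑ k, conj' (w₂ k) * w₁ k)
          + (conj' β * β) * (∑ k, conj' (w₂ k) * w₂ k) := by
          rw [Finset.sum_congr rfl fun k _ => expand k]
          simp [Finset.sum_add_distrib, Finset.mul_sum]
      _ = 1 := by rw [hw11, hw22, hw12, hw21]; simpa using hab
  -- orthogonality of Aw to u
  have horth : ∑ i, conj' (u i) * Aw i = 0 := by
    simp only [hAw_def, hw_def, _root_.map_add, _root_.map_mul, Fin.sum_univ_three] at hor ⊢
    linear_combination hor
  -- positivity of eigenvalues
  have hpsd1 : (rho1 c).PosSemidef := by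
    have heq : rho1 c = (Matrix.of fun i (p : Fin 3 × Fin 3) => c i p.1 p.2)
        * (Matrix.of fun i (p : Fin 3 × Fin 3) => c i p.1 p.2)ᴴ := by
      ext i i'
      simp [Matrix.mul_apply, Matrix.conjTranspose_apply, rho1, Fintype.sum_prod_type]
    rw [heq]; exact Matrix.posSemidef_self_mul_conjTranspose _
  have hf1_nonneg : 0 ≤ f 1 := by
    rw [hf 1]; exact hpsd1.eigenvalues_nonneg (σ1 1)
  set q : ℝ := ∑ i, Complex.normSq (Aw i) with hq_def
  have hq_nonneg : 0 ≤ q := Finset.sum_nonneg fun i _ => Complex.normSq_nonneg _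
  -- lower bound : g 2 + h 1 ≤ 1 + q
  have hB : ∑ i, ∑ k, Complex.normSq (∑ j, conj' (v j) * c i j k) = g 2 := by
    have hveig : ∀ i, ∑ i', rho2 c i i' * v i' = (H2.eigenvalues (σ2 2) : ℂ) * v i :=
      fun i => eig_pointwise' H2 (σ2 2) i
    rw [sum_ns2 (fun i k => ∑ j, conj' (v j) * c i j k), quad2 c v]
    rw [Finset.sum_congr rfl fun j (_ : j ∈ Finset.univ) => by rw [hveig j]]
    have hfin : ∑ j, conj' (v j) * ((H2.eigenvalues (σ2 2) : ℂ) * v j)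
        = (H2.eigenvalues (σ2 2) : ℂ) := by
      calc ∑ j, conj' (v j) * ((H2.eigenvalues (σ2 2) : ℂ) * v j)
          = (H2.eigenvalues (σ2 2) : ℂ) * ∑ j, conj' (v j) * v j := by
            rw [Finset.mul_sum]
            exact Finset.sum_congr rfl fun j _ => by ring
        _ = (H2.eigenvalues (σ2 2) : ℂ) := by rw [hv_unit, mul_one]
    rw [hfin, Complex.ofReal_re, hg 2]
  have hC : h 1 ≤ ∑ i, ∑ j, Complex.normSq (∑ k, conj' (w k) * c i j k) := by
    have hmv : ∀ k, (∑ k', rho3 c k k' * w k')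
        = α * ((H3.eigenvalues (σ3 1) : ℂ) * w₁ k) + β * ((H3.eigenvalues (σ3 2) : ℂ) * w₂ k) := by
      intro k
      have hweig1 : ∀ i, ∑ i', rho3 c i i' * w₁ i' = (H3.eigenvalues (σ3 1) : ℂ) * w₁ i :=
        fun i => eig_pointwise' H3 (σ3 1) i
      have hweig2 : ∀ i, ∑ i', rho3 c i i' * w₂ i' = (H3.eigenvalues (σ3 2) : ℂ) * w₂ i :=
        fun i => eig_pointwise' H3 (σ3 2) i
      rw [← hweig1 k, ← hweig2 k]
      simp only [hw_def, Finset.mul_sum]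
      rw [← Finset.sum_add_distrib]
      exact Finset.sum_congr rfl fun k' _ => by ring
    have hqc : ∑ k, conj' (w k) * (∑ k', rho3 c k k' * w k')
        = (conj' α * α) * (H3.eigenvalues (σ3 1) : ℂ)
          + (conj' β * β) * (H3.eigenvalues (σ3 2) : ℂ) := by
      rw [Finset.sum_congr rfl fun k (_ : k ∈ Finset.univ) => by rw [hmv k]]
      have expand : ∀ k, conj' (w k) * (α * ((H3.eigenvalues (σ3 1) : ℂ) * w₁ k)
            + β * ((H3.eigenvalues (σ3 2) : ℂ) * w₂ k))
          = ((conj' α * α) * (H3.eigenvalues (σ3 1) : ℂ)) * (conj' (w₁ k) * w₁ k)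
            + ((conj' α * β) * (H3.eigenvalues (σ3 2) : ℂ)) * (conj' (w₁ k) * w₂ k)
            + ((conj' β * α) * (H3.eigenvalues (σ3 1) : ℂ)) * (conj' (w₂ k) * w₁ k)
            + ((conj' β * β) * (H3.eigenvalues (σ3 2) : ℂ)) * (conj' (w₂ k) * w₂ k) := by
        intro k; simp only [hw_def, _root_.map_add, _root_.map_mul]; ring
      rw [Finset.sum_congr rfl fun k (_ : k ∈ Finset.univ) => expand k]
      simp only [Finset.sum_add_distrib, ← Finset.mul_sum]
      rw [hw11, hw22, hw12, hw21]
      ring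
    have hre : ∑ i, ∑ j, Complex.normSq (∑ k, conj' (w k) * c i j k)
        = Complex.normSq α * H3.eigenvalues (σ3 1) + Complex.normSq β * H3.eigenvalues (σ3 2) := by
      rw [sum_ns2 (fun i j => ∑ k, conj' (w k) * c i j k), quad3 c w, hqc]
      have h1 : (conj' α * α) = (Complex.normSq α : ℂ) := by
        rw [← Complex.mul_conj]; ring
      have h2 : (conj' β * β) = (Complex.normSq β : ℂ) := by
        rw [← Complex.mul_conj]; ring
      rw [h1, h2, ← Complex.ofReal_mul, ← Complex.ofReal_mul, ← Complex.ofReal_add,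
        Complex.ofReal_re]
    have habr : Complex.normSq α + Complex.normSq β = 1 := by
      have h1 : (conj' α * α) = (Complex.normSq α : ℂ) := by rw [← Complex.mul_conj]; ring
      have h2 : (conj' β * β) = (Complex.normSq β : ℂ) := by rw [← Complex.mul_conj]; ring
      rw [h1, h2, ← Complex.ofReal_add] at hab
      exact_mod_cast hab
    rw [hre, ← hh 1, ← hh 2]
    have hmono : h 1 ≤ h 2 := mh (by decide : (1:Fin 3) ≤ 2)
    have hα := Complex.normSq_nonneg α
    have hβ := Complex.normSq_nonneg β
    have hsplit : Complex.normSq α * h 1 + Complex.normSq β * h 1 = h 1 := by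
      rw [← add_mul, habr, one_mul]
    linarith [mul_le_mul_of_nonneg_left hmono hβ, hsplit]
  have hlow : g 2 + h 1 ≤ 1 + q := by
    have hsum := Finset.sum_le_sum (s := Finset.univ)
      (fun (i : Fin 3) _ => key_ineq v w (c i) hv_unit hw_unit)
    rw [Finset.sum_add_distrib, Finset.sum_add_distrib] at hsum
    rw [← hB]
    have : ∑ i, Complex.normSq (∑ j, ∑ k, conj' (v j) * (conj' (w k) * c i j k)) = q := by
      rw [hq_def]
    rw [this, hnorm'] at hsum
    have hC' := hC
    linarith
  -- upper bound : q ≤ f 1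
  have hup : q ≤ f 1 := by
    set T : Fin 3 → ℂ := fun m => ∑ i, conj' (H1.eigenvectorBasis m i) * Aw i with hT_def
    have hT2 : T (σ1 2) = 0 := horth
    have hconjT : ∀ m, ∑ i, H1.eigenvectorBasis m i * conj' (Aw i) = conj' (T m) := by
      intro m
      rw [hT_def, _root_.map_sum]
      exact Finset.sum_congr rfl fun i _ => by simp [_root_.map_mul]
    have hq_parseval : q = ∑ m, Complex.normSq (T m) := by
      have hc : ∑ i, Aw i * conj' (Aw i) = ∑ m, T m * conj' (T m) := by
        calc ∑ i, Aw i * conj' (Aw i)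
            = ∑ i, (∑ m, T m * H1.eigenvectorBasis m i) * conj' (Aw i) := by
              refine Finset.sum_congr rfl fun i _ => ?_
              congr 1
              exact onb_complete (H1.eigenvectorBasis) Aw i
          _ = ∑ m, T m * (∑ i, H1.eigenvectorBasis m i * conj' (Aw i)) := by
              simp only [Finset.sum_mul]
              rw [Finset.sum_comm]
              exact Finset.sum_congr rfl fun m _ => by
                rw [Finset.mul_sum]
                exact Finset.sum_congr rfl fun i _ => by ring
          _ = ∑ m, T m * conj' (T m) :=
              Finset.sum_congr rfl fun m _ => by rw [hconjT m]
      rw [hq_def, sum_ns Aw, hc, ← sum_ns T]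
    have hQA : ∑ i, conj' (Aw i) * (∑ i', rho1 c i i' * Aw i')
        = ∑ m, (H1.eigenvalues m : ℂ) * (T m * conj' (T m)) := by
      have hAwexp : ∀ i, Aw i = ∑ m, T m * H1.eigenvectorBasis m i := fun i =>
        onb_complete (H1.eigenvectorBasis) Aw i
      have step1 : ∀ i, (∑ i', rho1 c i i' * Aw i')
          = ∑ m, T m * ((H1.eigenvalues m : ℂ) * H1.eigenvectorBasis m i) := by
        intro i
        calc ∑ i', rho1 c i i' * Aw i'
            = ∑ i', ∑ m, T m * (rho1 c i i' * H1.eigenvectorBasis m i') := by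
              refine Finset.sum_congr rfl fun i' _ => ?_
              rw [hAwexp i', Finset.mul_sum]
              exact Finset.sum_congr rfl fun m _ => by ring
          _ = ∑ m, ∑ i', T m * (rho1 c i i' * H1.eigenvectorBasis m i') := Finset.sum_comm
          _ = ∑ m, T m * ((H1.eigenvalues m : ℂ) * H1.eigenvectorBasis m i) := by
              refine Finset.sum_congr rfl fun m _ => ?_
              rw [← Finset.mul_sum, eig_pointwise' H1 m i]
      calc ∑ i, conj' (Aw i) * (∑ i', rho1 c i i' * Aw i')
          = ∑ i, ∑ m, ((H1.eigenvalues m : ℂ) * T m) * (H1.eigenvectorBasis m i * conj' (Aw i)) := by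
            refine Finset.sum_congr rfl fun i _ => ?_
            rw [step1 i, Finset.mul_sum]
            exact Finset.sum_congr rfl fun m _ => by ring
        _ = ∑ m, ∑ i, ((H1.eigenvalues m : ℂ) * T m) * (H1.eigenvectorBasis m i * conj' (Aw i)) :=
            Finset.sum_comm
        _ = ∑ m, (H1.eigenvalues m : ℂ) * (T m * conj' (T m)) := by
            refine Finset.sum_congr rfl fun m _ => ?_
            rw [← Finset.mul_sum, hconjT m]
            ring
    have hQA_re : (∑ i, conj' (Aw i) * (∑ i', rho1 c i i' * Aw i')).re
        = ∑ m, (H1.eigenvalues m) * Complex.normSq (T m) := by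
      rw [hQA, Complex.re_sum]
      exact Finset.sum_congr rfl fun m _ => by
        rw [Complex.mul_conj, ← Complex.ofReal_mul, Complex.ofReal_re]
    have hQA_le : ∑ m, (H1.eigenvalues m) * Complex.normSq (T m) ≤ f 1 * q := by
      rw [hq_parseval, Finset.mul_sum]
      apply Finset.sum_le_sum
      intro m _
      by_cases hm : m = σ1 2
      · rw [hm, hT2]; simp
      · have hi0 : σ1.symm m ≠ 2 := fun hcon => hm (by rw [← hcon, Equiv.apply_symm_apply])
        have hle : σ1.symm m ≤ 1 := by omega
        have : H1.eigenvalues m = f (σ1.symm m) := by rw [hf, Equiv.apply_symm_apply]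
        rw [this]
        exact mul_le_mul_of_nonneg_right (mf hle) (Complex.normSq_nonneg _)
    have hq2 : q ^ 2 ≤ ∑ m, (H1.eigenvalues m) * Complex.normSq (T m) := by
      set U : Fin 3 × Fin 3 → ℂ := fun p => conj' (v p.1) * conj' (w p.2) with hU_def
      set Z : Fin 3 × Fin 3 → ℂ := fun p => ∑ i, conj' (c i p.1 p.2) * Aw i with hZ_def
      have hU_unit : ∑ p, conj' (U p) * U p = 1 := by
        rw [hU_def]
        rw [Fintype.sum_prod_type]
        calc ∑ j : Fin 3, ∑ k : Fin 3,
              conj' (conj' (v j) * conj' (w k)) * (conj' (v j) * conj' (w k))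
            = ∑ j : Fin 3, ∑ k : Fin 3, (conj' (v j) * v j) * (conj' (w k) * w k) := by
              refine Finset.sum_congr rfl fun j _ => Finset.sum_congr rfl fun k _ => ?_
              simp only [_root_.map_mul, Complex.conj_conj]
              ring
          _ = (∑ j, conj' (v j) * v j) * (∑ k, conj' (w k) * w k) := by
              rw [Finset.sum_mul_sum]
          _ = 1 := by rw [hv_unit, hw_unit, mul_one]
      have hUZ : ∑ p, conj' (U p) * Z p = (q : ℂ) := by
        have h1 : ∑ p, conj' (U p) * Z p = ∑ i, Aw i * conj' (Aw i) := by
          simp only [hU_def, hZ_def, hAw_def, Fintype.sum_prod_type, _root_.map_sum,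
            _root_.map_mul, Complex.conj_conj]
          simp only [Fin.sum_univ_three]
          ring
        rw [h1, hq_def, Complex.ofReal_sum]
        exact Finset.sum_congr rfl fun i _ => Complex.mul_conj _
      have hbes := bessel U Z hU_unit
      rw [hUZ, Complex.normSq_ofReal] at hbes
      have hZsum : ∑ p, Complex.normSq (Z p)
          = ∑ m, (H1.eigenvalues m) * Complex.normSq (T m) := by
        rw [Fintype.sum_prod_type]
        rw [sum_ns2 (fun j k => Z (j, k))]
        have : ∑ j : Fin 3, ∑ k : Fin 3, Z (j, k) * conj' (Z (j, k))
            = ∑ i, conj' (Aw i) * (∑ i', rho1 c i i' * Aw i') := by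
          rw [hZ_def]
          exact quadG c Aw
        rw [this, hQA_re]
      rw [hZsum] at hbes
      calc q ^ 2 = q * q := sq q
        _ ≤ _ := hbes
    nlinarith
  linarith


end ThreeQutritAux

open ThreeQutritAux

theorem three_qutrit_ineq2 (c : Fin 3 → Fin 3 → Fin 3 → ℂ)
    (hnorm : ∑ i : Fin 3, ∑ j : Fin 3, ∑ k : Fin 3, ‖c i j k‖ ^ 2 = 1)
    (l : Fin 3 → Fin 3 → ℝ)
    (h1 : IsOrderedSpectrum (rho1 c) (l 0))
    (h2 : IsOrderedSpectrum (rho2 c) (l 1))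
    (h3 : IsOrderedSpectrum (rho3 c) (l 2)) :
    ∀ a b c' : Fin 3, a ≠ b → a ≠ c' → b ≠ c' →
      l a 2 + l a 0 ≤ l b 1 + l b 0 + l c' 2 + l c' 0 := by
  classical
  -- trace facts
  have htr : ∀ (ρ : Matrix (Fin 3) (Fin 3) ℂ) (f : Fin 3 → ℝ), ρ.trace = 1 →
      IsOrderedSpectrum ρ f → f 0 + f 1 + f 2 = 1 := by
    intro ρ f htrace hs
    obtain ⟨mono, hM, σ, hl⟩ := hs
    have h := ThreeQutritAux.trace_eq_sum_eig hM
    rw [htrace] at h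
    have hsum : ∑ m, hM.eigenvalues m = 1 := by
      have : ((∑ m, hM.eigenvalues m : ℝ) : ℂ) = 1 := by
        rw [Complex.ofReal_sum]; exact h.symm
      exact_mod_cast this
    calc f 0 + f 1 + f 2 = ∑ i : Fin 3, hM.eigenvalues (σ i) := by
          rw [Fin.sum_univ_three, hl 0, hl 1, hl 2]
      _ = ∑ m, hM.eigenvalues m := Equiv.sum_comp σ _
      _ = 1 := hsum
  have hnormSq : ∑ i : Fin 3, ∑ j : Fin 3, ∑ k : Fin 3, Complex.normSq (c i j k) = 1 := by
    simpa [Complex.sq_norm] using hnorm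
  have htr1 : (rho1 c).trace = 1 := by
    have : (rho1 c).trace = ((∑ i : Fin 3, ∑ j : Fin 3, ∑ k : Fin 3,
        Complex.normSq (c i j k) : ℝ) : ℂ) := by
      simp only [Matrix.trace, Matrix.diag, rho1, Matrix.of_apply, Complex.mul_conj,
        Complex.ofReal_sum]
    rw [this, hnormSq, Complex.ofReal_one]
  have htr2 : (rho2 c).trace = 1 := by
    have : (rho2 c).trace = ((∑ j : Fin 3, ∑ i : Fin 3, ∑ k : Fin 3,
        Complex.normSq (c i j k) : ℝ) : ℂ) := by
      simp only [Matrix.trace, Matrix.diag, rho2, Matrix.of_apply, Complex.mul_conj,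
        Complex.ofReal_sum]
    rw [this]
    rw [Finset.sum_comm, hnormSq, Complex.ofReal_one]
  have htr3 : (rho3 c).trace = 1 := by
    have heq : (rho3 c).trace = ((∑ k : Fin 3, ∑ i : Fin 3, ∑ j : Fin 3,
        Complex.normSq (c i j k) : ℝ) : ℂ) := by
      simp only [Matrix.trace, Matrix.diag, rho3, Matrix.of_apply, Complex.mul_conj,
        Complex.ofReal_sum]
    rw [heq]
    have : ∑ k : Fin 3, ∑ i : Fin 3, ∑ j : Fin 3, Complex.normSq (c i j k)
        = ∑ i : Fin 3, ∑ j : Fin 3, ∑ k : Fin 3, Complex.normSq (c i j k) := by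
      simp only [Fin.sum_univ_three]; ring
    rw [this, hnormSq, Complex.ofReal_one]
  have ht0 := htr (rho1 c) (l 0) htr1 h1
  have ht1 := htr (rho2 c) (l 1) htr2 h2
  have ht2 := htr (rho3 c) (l 2) htr3 h3
  -- permuted tensors and their norms
  have hn_perm : ∀ d : Fin 3 → Fin 3 → Fin 3 → ℂ,
      (∑ i : Fin 3, ∑ j : Fin 3, ∑ k : Fin 3, ‖d i j k‖ ^ 2
        = ∑ i : Fin 3, ∑ j : Fin 3, ∑ k : Fin 3, ‖c i j k‖ ^ 2) →
      ∑ i : Fin 3, ∑ j : Fin 3, ∑ k : Fin 3, ‖d i j k‖ ^ 2 = 1 := fun d hd => hd.trans hnorm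
  -- the six core inequalities
  have k012 : l 1 2 + l 2 1 ≤ 1 + l 0 1 := core c hnorm (l 0) (l 1) (l 2) h1 h2 h3
  have k021 : l 2 2 + l 1 1 ≤ 1 + l 0 1 := by
    have e1 : rho1 (fun i j k => c i k j) = rho1 c := by
      ext i i'
      simp only [rho1, Matrix.of_apply]
      exact Finset.sum_comm
    have e2 : rho2 (fun i j k => c i k j) = rho3 c := rfl
    have e3 : rho3 (fun i j k => c i k j) = rho2 c := rfl
    refine core (fun i j k => c i k j) (hn_perm _ ?_) (l 0) (l 2) (l 1)
      (by rw [e1]; exact h1) (by rw [e2]; exact h3) (by rw [e3]; exact h2)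
    simp only [Fin.sum_univ_three]; ring
  have k102 : l 0 2 + l 2 1 ≤ 1 + l 1 1 := by
    have e1 : rho1 (fun i j k => c j i k) = rho2 c := rfl
    have e2 : rho2 (fun i j k => c j i k) = rho1 c := rfl
    have e3 : rho3 (fun i j k => c j i k) = rho3 c := by
      ext k k'
      simp only [rho3, Matrix.of_apply]
      exact Finset.sum_comm
    refine core (fun i j k => c j i k) (hn_perm _ ?_) (l 1) (l 0) (l 2)
      (by rw [e1]; exact h2) (by rw [e2]; exact h1) (by rw [e3]; exact h3)
    simp only [Fin.sum_univ_three]; ring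
  have k120 : l 2 2 + l 0 1 ≤ 1 + l 1 1 := by
    have e1 : rho1 (fun i j k => c k i j) = rho2 c := by
      ext i i'
      simp only [rho1, rho2, Matrix.of_apply]
      exact Finset.sum_comm
    have e2 : rho2 (fun i j k => c k i j) = rho3 c := by
      ext j j'
      simp only [rho2, rho3, Matrix.of_apply]
      exact Finset.sum_comm
    have e3 : rho3 (fun i j k => c k i j) = rho1 c := rfl
    refine core (fun i j k => c k i j) (hn_perm _ ?_) (l 1) (l 2) (l 0)
      (by rw [e1]; exact h2) (by rw [e2]; exact h3) (by rw [e3]; exact h1)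
    simp only [Fin.sum_univ_three]; ring
  have k201 : l 0 2 + l 1 1 ≤ 1 + l 2 1 := by
    have e1 : rho1 (fun i j k => c j k i) = rho3 c := rfl
    have e2 : rho2 (fun i j k => c j k i) = rho1 c := by
      ext i i'
      simp only [rho1, rho2, Matrix.of_apply]
      exact Finset.sum_comm
    have e3 : rho3 (fun i j k => c j k i) = rho2 c := by
      ext j j'
      simp only [rho2, rho3, Matrix.of_apply]
      exact Finset.sum_comm
    refine core (fun i j k => c j k i) (hn_perm _ ?_) (l 2) (l 0) (l 1)
      (by rw [e1]; exact h3) (by rw [e2]; exact h1) (by rw [e3]; exact h2)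
    simp only [Fin.sum_univ_three]; ring
  have k210 : l 1 2 + l 0 1 ≤ 1 + l 2 1 := by
    have e1 : rho1 (fun i j k => c k j i) = rho3 c := by
      ext i i'
      simp only [rho1, rho3, Matrix.of_apply]
      exact Finset.sum_comm
    have e2 : rho2 (fun i j k => c k j i) = rho2 c := by
      ext j j'
      simp only [rho2, Matrix.of_apply]
      exact Finset.sum_comm
    have e3 : rho3 (fun i j k => c k j i) = rho1 c := by
      ext k k'
      simp only [rho1, rho3, Matrix.of_apply]
      exact Finset.sum_comm
    refine core (fun i j k => c k j i) (hn_perm _ ?_) (l 2) (l 1) (l 0)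
      (by rw [e1]; exact h3) (by rw [e2]; exact h2) (by rw [e3]; exact h1)
    simp only [Fin.sum_univ_three]; ring
  intro a b c' hab hac hbc
  fin_cases a <;> fin_cases b <;> fin_cases c' <;>
    simp_all <;> linarith
end

section
/- For any pure three-qutrit state, with λ_1^{(a)} ≤ λ_2^{(a)} ≤ λ_3^{(a)} the increasingly ordered eigenvalues of the a-th one-particle reduced density matrix, the inequality λ_2^{(a)} + λ_3^{(a)} ≤ λ_2^{(b)} + λ_1^{(b)} + λ_2^{(c)} + λ_3^{(c)} holds for every permutation (a,b,c) of (1,2,3). -/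
open scoped BigOperators

section Helpers

open Matrix Complex Finset

local notation "conj'" => starRingEnd ℂ

/-- Cauchy-Schwarz for complex sums. -/
lemma qutrit_cs_sum {ι : Type*} [Fintype ι] (a b : ι → ℂ) :
    ‖∑ i, a i * b i‖ ^ 2 ≤ (∑ i, ‖a i‖ ^ 2) * (∑ i, ‖b i‖ ^ 2) := by
  classical
  let x : EuclideanSpace ℂ ι := WithLp.toLp 2 (fun i => conj' (a i))
  let y : EuclideanSpace ℂ ι := WithLp.toLp 2 b
  have h := norm_inner_le_norm (𝕜 := ℂ) x y
  have hinner : (inner ℂ x y : ℂ) = ∑ i, a i * b i := by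
    simp [PiLp.inner_apply, x, y, mul_comm]
  have hx : ‖x‖ = Real.sqrt (∑ i, ‖a i‖ ^ 2) := by
    simp [EuclideanSpace.norm_eq, x]
  have hy : ‖y‖ = Real.sqrt (∑ i, ‖b i‖ ^ 2) := by
    simp [EuclideanSpace.norm_eq, y]
  calc ‖∑ i, a i * b i‖ ^ 2 = ‖(inner ℂ x y : ℂ)‖ ^ 2 := by rw [hinner]
    _ ≤ (‖x‖ * ‖y‖) ^ 2 := by
        have h0 : (0:ℝ) ≤ ‖(inner ℂ x y : ℂ)‖ := norm_nonneg _
        nlinarith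
    _ = (∑ i, ‖a i‖ ^ 2) * (∑ i, ‖b i‖ ^ 2) := by
        rw [mul_pow, hx, hy, Real.sq_sqrt (by positivity), Real.sq_sqrt (by positivity)]

lemma qutrit_helper_sum (U : Matrix (Fin 3) (Fin 3) ℂ)
    (hU : ∀ i i', (∑ p, U i p * conj' (U i' p)) = if i = i' then 1 else 0)
    (t : Fin 3 → ℂ) :
    (∑ p, (∑ i, U i p * t i) * conj' (∑ i, U i p * t i)) = ∑ i, t i * conj' (t i) := by
  have e00 := hU 0 0; have e01 := hU 0 1; have e02 := hU 0 2
  have e10 := hU 1 0; have e11 := hU 1 1; have e12 := hU 1 2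
  have e20 := hU 2 0; have e21 := hU 2 1; have e22 := hU 2 2
  norm_num [Fin.sum_univ_three, Fin.ext_iff] at e00 e01 e02 e10 e11 e12 e20 e21 e22
  simp only [Fin.sum_univ_three, map_add, _root_.map_mul]
  linear_combination (t 0 * conj' (t 0)) * e00 + (t 0 * conj' (t 1)) * e01 +
    (t 0 * conj' (t 2)) * e02 + (t 1 * conj' (t 0)) * e10 + (t 1 * conj' (t 1)) * e11 +
    (t 1 * conj' (t 2)) * e12 + (t 2 * conj' (t 0)) * e20 + (t 2 * conj' (t 1)) * e21 +
    (t 2 * conj' (t 2)) * e22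

lemma qutrit_exists_unit_kernel (T : Matrix (Fin 3) (Fin 3) ℂ) (p0 : Fin 3)
    (h0 : ∀ k, T p0 k = 0) :
    ∃ s : Fin 3 → ℂ, (∑ k, ‖s k‖ ^ 2) = 1 ∧ ∀ p, (∑ k, T p k * s k) = 0 := by
  have hdet : T.det = 0 := Matrix.det_eq_zero_of_row_eq_zero p0 h0
  obtain ⟨v, hv, hTv⟩ := (Matrix.exists_mulVec_eq_zero_iff).mpr hdet
  set r : ℝ := Real.sqrt (∑ k, ‖v k‖ ^ 2) with hr
  have hsum_pos : 0 < ∑ k, ‖v k‖ ^ 2 := by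
    have hex : ∃ k, v k ≠ 0 := by
      by_contra hc
      push_neg at hc
      exact hv (funext hc)
    obtain ⟨k, hk⟩ := hex
    have h1 : 0 < ‖v k‖ ^ 2 := pow_pos (norm_pos_iff.mpr hk) 2
    have h2 : ∀ j ∈ Finset.univ, (0:ℝ) ≤ ‖v j‖ ^ 2 := fun j _ => by positivity
    exact lt_of_lt_of_le h1 (Finset.single_le_sum h2 (Finset.mem_univ k))
  have hrpos : 0 < r := Real.sqrt_pos.mpr hsum_pos
  refine ⟨fun k => (r : ℂ)⁻¹ * v k, ?_, ?_⟩
  · have he : ∀ k, ‖(r : ℂ)⁻¹ * v k‖ ^ 2 = (r^2)⁻¹ * ‖v k‖ ^ 2 := by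
      intro k
      rw [norm_mul, mul_pow, norm_inv, Complex.norm_real, Real.norm_eq_abs,
        abs_of_pos hrpos, inv_pow]
    simp only [he, ← Finset.mul_sum]
    rw [hr, Real.sq_sqrt hsum_pos.le, inv_mul_cancel₀ hsum_pos.ne']
  · intro p
    have hp : (T *ᵥ v) p = 0 := by rw [hTv]; rfl
    have hz : (∑ k, T p k * v k) = 0 := by
      simpa [Matrix.mulVec, dotProduct] using hp
    calc (∑ k, T p k * ((r:ℂ)⁻¹ * v k)) = (r:ℂ)⁻¹ * ∑ k, T p k * v k := by
          rw [Finset.mul_sum]; congr 1; ext k; ring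
      _ = 0 := by rw [hz, mul_zero]

lemma qutrit_sum_mul_conj_real {ι : Type*} [Fintype ι] (g : ι → ℂ) :
    (∑ i, g i * conj' (g i)) = ((∑ i, ‖g i‖ ^ 2 : ℝ) : ℂ) := by
  push_cast
  exact Finset.sum_congr rfl fun i _ => Complex.mul_conj' (g i)

lemma qutrit_sum2_mul_conj_real (g : Fin 3 → Fin 3 → ℂ) :
    (∑ a : Fin 3, ∑ b : Fin 3, g a b * conj' (g a b))
      = ((∑ a : Fin 3, ∑ b : Fin 3, ‖g a b‖ ^ 2 : ℝ) : ℂ) := by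
  push_cast
  exact Finset.sum_congr rfl fun a _ => Finset.sum_congr rfl fun b _ => Complex.mul_conj' _

lemma qutrit_trace_eq_sum_eig (A : Matrix (Fin 3) (Fin 3) ℂ) (hA : A.IsHermitian) :
    A.trace = ∑ i, (hA.eigenvalues i : ℂ) := by
  nth_rewrite 1 [hA.spectral_theorem]
  simp only [Unitary.conjStarAlgAut_apply, Unitary.coe_star]
  rw [Matrix.trace_mul_cycle]
  simp [Matrix.mul_assoc,
    (Matrix.mem_unitaryGroup_iff').mp (Matrix.IsHermitian.eigenvectorUnitary hA).2,
    Matrix.trace_diagonal]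

lemma qutrit_rowE (u zr : Fin 3 → ℂ) (hu : (∑ j, u j * conj' (u j)) = 1) :
    (∑ j, (zr j - conj' (u j) * (∑ j', u j' * zr j'))
        * conj' (zr j - conj' (u j) * (∑ j', u j' * zr j')))
      = (∑ j, zr j * conj' (zr j))
        - (∑ j, u j * zr j) * conj' (∑ j, u j * zr j) := by
  simp only [Fin.sum_univ_three, map_add, map_sub, _root_.map_mul, Complex.conj_conj] at hu ⊢
  linear_combination ((u 0 * zr 0 + u 1 * zr 1 + u 2 * zr 2) *
    (conj' (u 0) * conj' (zr 0) + conj' (u 1) * conj' (zr 1) + conj' (u 2) * conj' (zr 2))) * hu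

end Helpers

section Core

open Matrix Complex Finset

local notation "conj'" => starRingEnd ℂ

lemma qutrit_core (c : Fin 3 → Fin 3 → Fin 3 → ℂ)
    (hnorm : ∑ i : Fin 3, ∑ j : Fin 3, ∑ k : Fin 3, ‖c i j k‖ ^ 2 = 1)
    (l1 l2 l3 : Fin 3 → ℝ)
    (h1 : IsOrderedSpectrum (rho1 c) l1)
    (h2 : IsOrderedSpectrum (rho2 c) l2)
    (h3 : IsOrderedSpectrum (rho3 c) l3) :
    l1 1 + l1 2 ≤ l2 1 + l2 0 + l3 1 + l3 2 := by
  classical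
  obtain ⟨mono1, hA, σA, hl1⟩ := h1
  obtain ⟨mono2, hB, σB, hl2⟩ := h2
  obtain ⟨mono3, hC, σC, hl3⟩ := h3
  have hnorm2 : ∑ j : Fin 3, ∑ i : Fin 3, ∑ k : Fin 3, ‖c i j k‖ ^ 2 = 1 := by
    rw [Finset.sum_comm]; exact hnorm
  have hnorm3 : ∑ k : Fin 3, ∑ i : Fin 3, ∑ j : Fin 3, ‖c i j k‖ ^ 2 = 1 := by
    simp only [Fin.sum_univ_three] at hnorm ⊢; linarith
  have tr1c : (rho1 c).trace = ((1:ℝ) : ℂ) := by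
    rw [← hnorm]
    simp only [Matrix.trace, Matrix.diag, rho1, Matrix.of_apply, Complex.mul_conj']
    push_cast
    rfl
  have tr2c : (rho2 c).trace = ((1:ℝ) : ℂ) := by
    rw [← hnorm2]
    simp only [Matrix.trace, Matrix.diag, rho2, Matrix.of_apply, Complex.mul_conj']
    push_cast
    rfl
  have tr3c : (rho3 c).trace = ((1:ℝ) : ℂ) := by
    rw [← hnorm3]
    simp only [Matrix.trace, Matrix.diag, rho3, Matrix.of_apply, Complex.mul_conj']
    push_cast
    rfl
  have sum_eigA : (∑ p, hA.eigenvalues p) = 1 := by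
    have h := (qutrit_trace_eq_sum_eig _ hA).symm.trans tr1c
    exact_mod_cast h
  have sum_eigB : (∑ p, hB.eigenvalues p) = 1 := by
    have h := (qutrit_trace_eq_sum_eig _ hB).symm.trans tr2c
    exact_mod_cast h
  have sum_eigC : (∑ p, hC.eigenvalues p) = 1 := by
    have h := (qutrit_trace_eq_sum_eig _ hC).symm.trans tr3c
    exact_mod_cast h
  have sum_l1 : l1 0 + l1 1 + l1 2 = 1 := by
    have h : (∑ i, l1 i) = ∑ p, hA.eigenvalues p := by
      rw [Finset.sum_congr rfl (fun i _ => hl1 i)]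
      exact Equiv.sum_comp σA _
    rw [Fin.sum_univ_three] at h
    linarith [sum_eigA]
  have sum_l2 : l2 0 + l2 1 + l2 2 = 1 := by
    have h : (∑ i, l2 i) = ∑ p, hB.eigenvalues p := by
      rw [Finset.sum_congr rfl (fun i _ => hl2 i)]
      exact Equiv.sum_comp σB _
    rw [Fin.sum_univ_three] at h
    linarith [sum_eigB]
  have sum_l3 : l3 0 + l3 1 + l3 2 = 1 := by
    have h : (∑ i, l3 i) = ∑ p, hC.eigenvalues p := by
      rw [Finset.sum_congr rfl (fun i _ => hl3 i)]
      exact Equiv.sum_comp σC _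
    rw [Fin.sum_univ_three] at h
    linarith [sum_eigC]
  have αmin : ∀ p, l1 0 ≤ hA.eigenvalues p := by
    intro p
    have h := mono1 (Fin.zero_le (σA.symm p))
    rwa [hl1 (σA.symm p), Equiv.apply_symm_apply] at h
  have γmin : ∀ p, l3 0 ≤ hC.eigenvalues p := by
    intro p
    have h := mono3 (Fin.zero_le (σC.symm p))
    rwa [hl3 (σC.symm p), Equiv.apply_symm_apply] at h
  have key : l2 2 + l3 0 ≤ 1 + l1 0 := by
    -- eigenvector unitaries
    set VA : Matrix (Fin 3) (Fin 3) ℂ := (hA.eigenvectorUnitary : Matrix (Fin 3) (Fin 3) ℂ)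
      with hVA
    set VB : Matrix (Fin 3) (Fin 3) ℂ := (hB.eigenvectorUnitary : Matrix (Fin 3) (Fin 3) ℂ)
      with hVB
    set VC : Matrix (Fin 3) (Fin 3) ℂ := (hC.eigenvectorUnitary : Matrix (Fin 3) (Fin 3) ℂ)
      with hVC
    have rowsA : ∀ i i', (∑ p, VA i p * conj' (VA i' p)) = if i = i' then 1 else 0 := by
      intro i i'
      have h := congrFun (congrFun ((Matrix.mem_unitaryGroup_iff).mp
        hA.eigenvectorUnitary.2) i) i'
      rw [← hVA] at h
      simpa [Matrix.mul_apply, Matrix.star_apply, Complex.star_def, Matrix.one_apply] using h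
    have rowsC : ∀ i i', (∑ p, VC i p * conj' (VC i' p)) = if i = i' then 1 else 0 := by
      intro i i'
      have h := congrFun (congrFun ((Matrix.mem_unitaryGroup_iff).mp
        hC.eigenvectorUnitary.2) i) i'
      rw [← hVC] at h
      simpa [Matrix.mul_apply, Matrix.star_apply, Complex.star_def, Matrix.one_apply] using h
    -- the top eigenvector u of rho2 is the column (σB 2) of VB
    have hu_norm_c : (∑ j, VB j (σB 2) * conj' (VB j (σB 2))) = 1 := by
      have h := congrFun (congrFun ((Matrix.mem_unitaryGroup_iff').mp
        hB.eigenvectorUnitary.2) (σB 2)) (σB 2)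
      rw [← hVB] at h
      simp only [Matrix.mul_apply, Matrix.star_apply, Complex.star_def,
        Matrix.one_apply_eq, Fin.sum_univ_three] at h
      rw [Fin.sum_univ_three]
      linear_combination h
    have hu_norm_r : (∑ j, ‖VB j (σB 2)‖ ^ 2) = 1 := by
      have h := hu_norm_c
      rw [qutrit_sum_mul_conj_real] at h
      exact_mod_cast h
    have hquadB : (star VB * rho2 c * VB) (σB 2) (σB 2) = ((l2 2 : ℝ) : ℂ) := by
      have h := hB.conjStarAlgAut_star_eigenvectorUnitary
      simp only [Unitary.conjStarAlgAut_apply, Unitary.coe_star, star_star] at h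
      rw [hVB, h]
      simp [Matrix.diagonal_apply_eq, hl2]
    set N : Fin 3 → Fin 3 → ℂ := fun i k => ∑ j, VB j (σB 2) * conj' (c i j k) with hN
    have hβ : (∑ i, ∑ k, N i k * conj' (N i k)) = ((l2 2 : ℝ) : ℂ) := by
      rw [← hquadB]
      simp only [hN, Matrix.mul_apply, Matrix.star_apply, Complex.star_def, rho2,
        Matrix.of_apply, Fin.sum_univ_three, map_add, _root_.map_mul, map_sum,
        Complex.conj_conj]
      ring
    -- A-side: Schmidt vectors
    set F : Fin 3 → Fin 3 → Fin 3 → ℂ := fun p j k => ∑ i, conj' (VA i p) * c i j k with hF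
    have hquadA : (star VA * rho1 c * VA) (σA 0) (σA 0) = ((l1 0 : ℝ) : ℂ) := by
      have h := hA.conjStarAlgAut_star_eigenvectorUnitary
      simp only [Unitary.conjStarAlgAut_apply, Unitary.coe_star, star_star] at h
      rw [hVA, h]
      simp [Matrix.diagonal_apply_eq, hl1]
    have hFnorm : (∑ j, ∑ k, F (σA 0) j k * conj' (F (σA 0) j k)) = ((l1 0 : ℝ) : ℂ) := by
      rw [← hquadA]
      simp only [hF, Matrix.mul_apply, Matrix.star_apply, Complex.star_def, rho1,
        Matrix.of_apply, Fin.sum_univ_three, map_add, _root_.map_mul, map_sum,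
        Complex.conj_conj]
      ring
    -- choose s orthogonal to the constraints
    obtain ⟨s, hs1, hs2⟩ := qutrit_exists_unit_kernel
      (Matrix.of fun p k => if p = σA 0 then 0 else (∑ j, VB j (σB 2) * conj' (F p j k)))
      (σA 0) (fun k => by simp)
    have hs1c : (∑ k, s k * conj' (s k)) = 1 := by
      rw [qutrit_sum_mul_conj_real, hs1]; norm_num
    have hτ0 : ∀ p, p ≠ σA 0 → (∑ k, (∑ j, VB j (σB 2) * conj' (F p j k)) * s k) = 0 := by
      intro p hp
      have h := hs2 p
      simpa [Matrix.of_apply, if_neg hp] using h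
    set t : Fin 3 → ℂ := fun i => ∑ k, N i k * s k with ht
    set τf : Fin 3 → ℂ := fun p => ∑ k, (∑ j, VB j (σB 2) * conj' (F p j k)) * s k with hτf
    have hτid : ∀ p, (∑ i, VA i p * t i) = τf p := by
      intro p
      simp only [ht, hτf, hN, hF, Fin.sum_univ_three, map_add, _root_.map_mul, map_sum,
        Complex.conj_conj]
      ring
    have hQs_c : (∑ i, t i * conj' (t i)) = τf (σA 0) * conj' (τf (σA 0)) := by
      rw [← qutrit_helper_sum VA rowsA t]
      have hstep : (∑ p, (∑ i, VA i p * t i) * conj' (∑ i, VA i p * t i))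
          = ∑ p, τf p * conj' (τf p) :=
        Finset.sum_congr rfl fun p _ => by rw [hτid p]
      rw [hstep]
      exact Finset.sum_eq_single_of_mem (σA 0) (Finset.mem_univ _)
        (fun b _ hb => by simp only [hτf]; rw [hτ0 b hb]; simp)
    have hQMs_r : (∑ i, ‖t i‖ ^ 2) = ‖τf (σA 0)‖ ^ 2 := by
      have h := hQs_c
      rw [qutrit_sum_mul_conj_real, Complex.mul_conj'] at h
      exact_mod_cast h
    -- Cauchy-Schwarz bound on τf (σA 0)
    have hτ_cs : ‖τf (σA 0)‖ ^ 2 ≤ l1 0 := by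
      have hcs := qutrit_cs_sum (ι := Fin 3 × Fin 3)
        (fun jk => VB jk.1 (σB 2) * s jk.2) (fun jk => conj' (F (σA 0) jk.1 jk.2))
      have e1 : (∑ jk : Fin 3 × Fin 3, (VB jk.1 (σB 2) * s jk.2) * conj' (F (σA 0) jk.1 jk.2))
          = τf (σA 0) := by
        rw [Fintype.sum_prod_type]
        simp only [hτf, Fin.sum_univ_three]
        ring
      have e2 : (∑ jk : Fin 3 × Fin 3, ‖VB jk.1 (σB 2) * s jk.2‖ ^ 2) = 1 := by
        rw [Fintype.sum_prod_type]
        simp only [norm_mul, mul_pow]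
        rw [show (∑ j : Fin 3, ∑ k : Fin 3, ‖VB j (σB 2)‖^2 * ‖s k‖^2)
            = (∑ j : Fin 3, ‖VB j (σB 2)‖^2) * (∑ k : Fin 3, ‖s k‖^2) from by
          rw [Finset.sum_mul]
          exact Finset.sum_congr rfl fun j _ => by rw [Finset.mul_sum]]
        rw [hu_norm_r, hs1, one_mul]
      have e3 : (∑ jk : Fin 3 × Fin 3, ‖conj' (F (σA 0) jk.1 jk.2)‖ ^ 2) = l1 0 := by
        simp only [RCLike.norm_conj]
        rw [Fintype.sum_prod_type]
        have h := hFnorm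
        rw [qutrit_sum2_mul_conj_real] at h
        exact_mod_cast h
      rw [e1, e2, e3, one_mul] at hcs
      exact hcs
    -- Rayleigh bound for rho3
    set z : Fin 3 → Fin 3 → ℂ := fun i j => ∑ k, conj' (c i j k) * s k with hz
    set gv : Fin 3 → ℂ := fun p => ∑ k, conj' (VC k p) * s k with hgv
    have hent : ∀ k' k : Fin 3, (rho3 c) k' k
        = ∑ p, VC k' p * ((hC.eigenvalues p : ℝ) : ℂ) * conj' (VC k p) := by
      intro k' k
      have hsp := hC.spectral_theorem
      simp only [Unitary.conjStarAlgAut_apply, Unitary.coe_star] at hsp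
      rw [← hVC] at hsp
      conv_lhs => rw [hsp]
      simp only [Matrix.mul_apply, Matrix.mul_diagonal, Matrix.diagonal_apply,
        Matrix.star_apply, Complex.star_def, Function.comp_apply, mul_ite, mul_zero,
        Finset.sum_ite_eq', Finset.mem_univ, if_true]
      exact Finset.sum_congr rfl fun p _ => rfl
    have hzg : (∑ i, ∑ j, z i j * conj' (z i j))
        = ∑ p, ((hC.eigenvalues p : ℝ) : ℂ) * (gv p * conj' (gv p)) := by
      have main1 : (∑ i, ∑ j, z i j * conj' (z i j))
          = ∑ k' : Fin 3, ∑ k : Fin 3, s k * conj' (s k') * (rho3 c) k' k := by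
        simp only [hz, rho3, Matrix.of_apply, Fin.sum_univ_three, map_add, _root_.map_mul,
          map_sum, Complex.conj_conj]
        ring
      have main2 : (∑ k' : Fin 3, ∑ k : Fin 3, s k * conj' (s k')
            * (∑ p, VC k' p * ((hC.eigenvalues p : ℝ) : ℂ) * conj' (VC k p)))
          = ∑ p, ((hC.eigenvalues p : ℝ) : ℂ) * (gv p * conj' (gv p)) := by
        simp only [hgv, Fin.sum_univ_three, map_add, _root_.map_mul, map_sum,
          Complex.conj_conj]
        ring
      rw [main1, Finset.sum_congr rfl (fun k' _ => Finset.sum_congr rfl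
        (fun k _ => by rw [hent k' k])), main2]
    have hgv_norm : (∑ p, gv p * conj' (gv p)) = 1 := by
      have hU : ∀ a b, (∑ p, (Matrix.of fun k p => conj' (VC k p)) a p
          * conj' ((Matrix.of fun k p => conj' (VC k p)) b p)) = if a = b then 1 else 0 := by
        intro a b
        have h := rowsC b a
        have h2 : (∑ p, (Matrix.of fun k p => conj' (VC k p)) a p
            * conj' ((Matrix.of fun k p => conj' (VC k p)) b p))
            = ∑ p, VC b p * conj' (VC a p) := by
          simp only [Matrix.of_apply, Complex.conj_conj]
          exact Finset.sum_congr rfl fun p _ => mul_comm _ _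
        rw [h2, h]
        rcases eq_or_ne a b with hab | hab
        · subst hab; simp
        · rw [if_neg hab, if_neg (Ne.symm hab)]
      have h := qutrit_helper_sum (Matrix.of fun k p => conj' (VC k p)) hU s
      simp only [Matrix.of_apply] at h
      simp only [hgv]
      exact h.trans hs1c
    have hray : l3 0 ≤ ∑ i, ∑ j, ‖z i j‖ ^ 2 := by
      have h1 : (∑ i, ∑ j, ‖z i j‖ ^ 2) = ∑ p, hC.eigenvalues p * ‖gv p‖ ^ 2 := by
        have h := hzg
        rw [qutrit_sum2_mul_conj_real] at h
        have h2 : (∑ p, ((hC.eigenvalues p : ℝ) : ℂ) * (gv p * conj' (gv p)))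
            = ((∑ p, hC.eigenvalues p * ‖gv p‖ ^ 2 : ℝ) : ℂ) := by
          push_cast
          exact Finset.sum_congr rfl fun p _ => by rw [Complex.mul_conj']
        rw [h2] at h
        exact_mod_cast h
      have h2 : (∑ p, ‖gv p‖ ^ 2) = 1 := by
        have h := hgv_norm
        rw [qutrit_sum_mul_conj_real] at h
        exact_mod_cast h
      have h3 : ∀ p ∈ Finset.univ, l3 0 * ‖gv p‖ ^ 2 ≤ hC.eigenvalues p * ‖gv p‖ ^ 2 :=
        fun p _ => mul_le_mul_of_nonneg_right (γmin p) (by positivity)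
      have h4 := Finset.sum_le_sum h3
      rw [← Finset.mul_sum, h2, mul_one] at h4
      rw [h1]
      exact h4
    -- the projection inequality (step E)
    set K : Fin 3 → Fin 3 → Fin 3 → ℂ :=
      fun i j k => conj' (c i j k) - conj' (VB j (σB 2)) * N i k with hK
    have ht_z : ∀ i, t i = ∑ j, VB j (σB 2) * z i j := by
      intro i
      simp only [ht, hz, hN, Fin.sum_univ_three]
      ring
    have hKid : ∀ i j, (∑ k, K i j k * s k) = z i j - conj' (VB j (σB 2)) * t i := by
      intro i j
      simp only [hK, ht, hz, hN, Fin.sum_univ_three]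
      ring
    have hSL_c : ∀ i, (∑ j, (∑ k, K i j k * s k) * conj' (∑ k, K i j k * s k))
        = (∑ j, z i j * conj' (z i j)) - t i * conj' (t i) := by
      intro i
      have hrow := qutrit_rowE (fun j => VB j (σB 2)) (z i) hu_norm_c
      simp only [] at hrow
      rw [← ht_z i] at hrow
      calc (∑ j, (∑ k, K i j k * s k) * conj' (∑ k, K i j k * s k))
          = ∑ j, (z i j - conj' (VB j (σB 2)) * t i)
              * conj' (z i j - conj' (VB j (σB 2)) * t i) :=
            Finset.sum_congr rfl fun j _ => by rw [hKid i j]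
        _ = (∑ j, z i j * conj' (z i j)) - t i * conj' (t i) := hrow
    have hSR_c : ∀ i k, (∑ j, K i j k * conj' (K i j k))
        = (∑ j, conj' (c i j k) * c i j k) - N i k * conj' (N i k) := by
      intro i k
      have hrow := qutrit_rowE (fun j => VB j (σB 2)) (fun j => conj' (c i j k)) hu_norm_c
      simp only [map_sub, _root_.map_mul, Complex.conj_conj] at hrow
      have hNid : (∑ j', VB j' (σB 2) * conj' (c i j' k)) = N i k := by
        rw [hN]
      rw [hNid] at hrow
      calc (∑ j, K i j k * conj' (K i j k))
          = ∑ j, (conj' (c i j k) - conj' (VB j (σB 2)) * N i k)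
              * (c i j k - VB j (σB 2) * conj' (N i k)) := by
            refine Finset.sum_congr rfl fun j _ => ?_
            simp only [hK, map_sub, _root_.map_mul, Complex.conj_conj]
        _ = (∑ j, conj' (c i j k) * c i j k) - N i k * conj' (N i k) := hrow
    -- real versions and Cauchy-Schwarz per row
    have hrowcs : ∀ i j, ‖∑ k, K i j k * s k‖ ^ 2 ≤ ∑ k, ‖K i j k‖ ^ 2 := by
      intro i j
      have h := qutrit_cs_sum (fun k => K i j k) s
      rw [hs1, mul_one] at h
      exact h
    have hsum_cs : (∑ i, ∑ j, ‖∑ k, K i j k * s k‖ ^ 2)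
        ≤ ∑ i, ∑ j, ∑ k, ‖K i j k‖ ^ 2 :=
      Finset.sum_le_sum fun i _ => Finset.sum_le_sum fun j _ => hrowcs i j
    have hSL_r : (∑ i, ∑ j, ‖∑ k, K i j k * s k‖ ^ 2)
        = (∑ i, ∑ j, ‖z i j‖ ^ 2) - (∑ i, ‖t i‖ ^ 2) := by
      have hc : (∑ i, ∑ j, (∑ k, K i j k * s k) * conj' (∑ k, K i j k * s k))
          = ((∑ i, ∑ j, ‖z i j‖ ^ 2) - (∑ i, ‖t i‖ ^ 2) : ℝ) := by
        rw [Finset.sum_congr rfl (fun i _ => hSL_c i)]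
        rw [Finset.sum_sub_distrib]
        rw [show (∑ i, ∑ j, z i j * conj' (z i j)) = ((∑ i, ∑ j, ‖z i j‖^2 : ℝ) : ℂ) from
          qutrit_sum2_mul_conj_real z]
        rw [show (∑ i, t i * conj' (t i)) = ((∑ i, ‖t i‖^2 : ℝ) : ℂ) from
          qutrit_sum_mul_conj_real t]
        push_cast
        ring
      have hc2 : (∑ i, ∑ j, (∑ k, K i j k * s k) * conj' (∑ k, K i j k * s k))
          = ((∑ i, ∑ j, ‖∑ k, K i j k * s k‖ ^ 2 : ℝ) : ℂ) :=
        qutrit_sum2_mul_conj_real _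
      rw [hc2] at hc
      exact_mod_cast hc
    have hSR_r : (∑ i, ∑ j, ∑ k, ‖K i j k‖ ^ 2) = 1 - l2 2 := by
      have hswap : (∑ i, ∑ j, ∑ k : Fin 3, ‖K i j k‖ ^ 2)
          = ∑ i, ∑ k, ∑ j : Fin 3, ‖K i j k‖ ^ 2 :=
        Finset.sum_congr rfl fun i _ => Finset.sum_comm
      have hc : (∑ i, ∑ k, (∑ j, K i j k * conj' (K i j k)))
          = ((1 - l2 2 : ℝ) : ℂ) := by
        rw [Finset.sum_congr rfl (fun i _ => Finset.sum_congr rfl (fun k _ => hSR_c i k))]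
        rw [Finset.sum_congr rfl (fun i _ => Finset.sum_sub_distrib _ _)]
        rw [Finset.sum_sub_distrib]
        rw [hβ]
        rw [show (∑ i, ∑ k, ∑ j, conj' (c i j k) * c i j k) = ((1:ℝ):ℂ) from ?_]
        · push_cast; try ring
        · rw [show (∑ i, ∑ k : Fin 3, ∑ j, conj' (c i j k) * c i j k)
              = ((∑ i, ∑ k : Fin 3, ∑ j, ‖c i j k‖^2 : ℝ) : ℂ) from ?_]
          · rw [show (∑ i, ∑ k : Fin 3, ∑ j, ‖c i j k‖^2) = (1:ℝ) from by
              simp only [Fin.sum_univ_three] at hnorm ⊢; linarith]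
          · push_cast
            refine Finset.sum_congr rfl fun i _ => Finset.sum_congr rfl fun k _ =>
              Finset.sum_congr rfl fun j _ => ?_
            rw [mul_comm, Complex.mul_conj']
            try push_cast
            try ring
      have hc2 : (∑ i, ∑ k, (∑ j, K i j k * conj' (K i j k)))
          = ((∑ i, ∑ k, ∑ j : Fin 3, ‖K i j k‖ ^ 2 : ℝ) : ℂ) := by
        push_cast
        refine Finset.sum_congr rfl fun i _ => Finset.sum_congr rfl fun k _ => ?_
        rw [qutrit_sum_mul_conj_real _]
        push_cast
        try ring
      rw [hc2] at hc
      have : (∑ i, ∑ k, ∑ j : Fin 3, ‖K i j k‖ ^ 2) = 1 - l2 2 := by exact_mod_cast hc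
      rw [hswap]
      exact this
    -- assemble
    have hTrM : (∑ i, ∑ k, ‖N i k‖ ^ 2) = l2 2 := by
      have h := hβ
      rw [qutrit_sum2_mul_conj_real] at h
      exact_mod_cast h
    have hfinal : (∑ i, ∑ j, ‖z i j‖ ^ 2) - (∑ i, ‖t i‖ ^ 2) ≤ 1 - l2 2 := by
      rw [← hSL_r, ← hSR_r]
      exact hsum_cs
    have hQMs_le : (∑ i, ‖t i‖ ^ 2) ≤ l1 0 := by
      rw [hQMs_r]; exact hτ_cs
    linarith [hray, hfinal, hQMs_le]
  linarith

end Core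

theorem three_qutrit_ineq3 (c : Fin 3 → Fin 3 → Fin 3 → ℂ)
    (hnorm : ∑ i : Fin 3, ∑ j : Fin 3, ∑ k : Fin 3, ‖c i j k‖ ^ 2 = 1)
    (l : Fin 3 → Fin 3 → ℝ)
    (h1 : IsOrderedSpectrum (rho1 c) (l 0))
    (h2 : IsOrderedSpectrum (rho2 c) (l 1))
    (h3 : IsOrderedSpectrum (rho3 c) (l 2)) :
    ∀ a b c' : Fin 3, a ≠ b → a ≠ c' → b ≠ c' →
      l a 1 + l a 2 ≤ l b 1 + l b 0 + l c' 1 + l c' 2 := by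
  intro a b c' hab hac hbc
  fin_cases a <;> fin_cases b <;> fin_cases c' <;>
    first
      | exact absurd rfl hab
      | exact absurd rfl hac
      | exact absurd rfl hbc
      | skip
  · -- (0,1,2)
    exact qutrit_core c hnorm (l 0) (l 1) (l 2) h1 h2 h3
  · -- (0,2,1)
    refine qutrit_core (fun i j k => c i k j) ?_ (l 0) (l 2) (l 1) ?_ ?_ ?_
    · simp only [Fin.sum_univ_three] at hnorm ⊢; linarith
    · rw [show rho1 (fun i j k => c i k j) = rho1 c from by
        ext i i'; simp only [rho1, Matrix.of_apply, Fin.sum_univ_three]; try ring]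
      exact h1
    · rw [show rho2 (fun i j k => c i k j) = rho3 c from by
        ext i i'; simp only [rho2, rho3, Matrix.of_apply, Fin.sum_univ_three]; try ring]
      exact h3
    · rw [show rho3 (fun i j k => c i k j) = rho2 c from by
        ext i i'; simp only [rho2, rho3, Matrix.of_apply, Fin.sum_univ_three]; try ring]
      exact h2
  · -- (1,0,2)
    refine qutrit_core (fun i j k => c j i k) ?_ (l 1) (l 0) (l 2) ?_ ?_ ?_
    · simp only [Fin.sum_univ_three] at hnorm ⊢; linarith
    · rw [show rho1 (fun i j k => c j i k) = rho2 c from by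
        ext i i'; simp only [rho1, rho2, Matrix.of_apply, Fin.sum_univ_three]; try ring]
      exact h2
    · rw [show rho2 (fun i j k => c j i k) = rho1 c from by
        ext i i'; simp only [rho1, rho2, Matrix.of_apply, Fin.sum_univ_three]; try ring]
      exact h1
    · rw [show rho3 (fun i j k => c j i k) = rho3 c from by
        ext i i'; simp only [rho3, Matrix.of_apply, Fin.sum_univ_three]; try ring]
      exact h3
  · -- (1,2,0)
    refine qutrit_core (fun i j k => c k i j) ?_ (l 1) (l 2) (l 0) ?_ ?_ ?_
    · simp only [Fin.sum_univ_three] at hnorm ⊢; linarith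
    · rw [show rho1 (fun i j k => c k i j) = rho2 c from by
        ext i i'; simp only [rho1, rho2, Matrix.of_apply, Fin.sum_univ_three]; try ring]
      exact h2
    · rw [show rho2 (fun i j k => c k i j) = rho3 c from by
        ext i i'; simp only [rho2, rho3, Matrix.of_apply, Fin.sum_univ_three]; try ring]
      exact h3
    · rw [show rho3 (fun i j k => c k i j) = rho1 c from by
        ext i i'; simp only [rho3, rho1, Matrix.of_apply, Fin.sum_univ_three]; try ring]
      exact h1
  · -- (2,0,1)
    refine qutrit_core (fun i j k => c j k i) ?_ (l 2) (l 0) (l 1) ?_ ?_ ?_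
    · simp only [Fin.sum_univ_three] at hnorm ⊢; linarith
    · rw [show rho1 (fun i j k => c j k i) = rho3 c from by
        ext i i'; simp only [rho1, rho3, Matrix.of_apply, Fin.sum_univ_three]; try ring]
      exact h3
    · rw [show rho2 (fun i j k => c j k i) = rho1 c from by
        ext i i'; simp only [rho2, rho1, Matrix.of_apply, Fin.sum_univ_three]; try ring]
      exact h1
    · rw [show rho3 (fun i j k => c j k i) = rho2 c from by
        ext i i'; simp only [rho3, rho2, Matrix.of_apply, Fin.sum_univ_three]; try ring]
      exact h2
  · -- (2,1,0)
    refine qutrit_core (fun i j k => c k j i) ?_ (l 2) (l 1) (l 0) ?_ ?_ ?_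
    · simp only [Fin.sum_univ_three] at hnorm ⊢; linarith
    · rw [show rho1 (fun i j k => c k j i) = rho3 c from by
        ext i i'; simp only [rho1, rho3, Matrix.of_apply, Fin.sum_univ_three]; try ring]
      exact h3
    · rw [show rho2 (fun i j k => c k j i) = rho2 c from by
        ext i i'; simp only [rho2, Matrix.of_apply, Fin.sum_univ_three]; try ring]
      exact h2
    · rw [show rho3 (fun i j k => c k j i) = rho1 c from by
        ext i i'; simp only [rho3, rho1, Matrix.of_apply, Fin.sum_univ_three]; try ring]
      exact h1
end

section
/- For any pure three-qutrit state, with λ_1^{(a)} ≤ λ_2^{(a)} ≤ λ_3^{(a)} the increasingly ordered eigenvalues of the a-th one-particle reduced density matrix, the inequality λ_2^{(b)} + λ_3^{(c)} ≥ λ_2^{(a)} holds for every permutation (a,b,c) of (1,2,3). -/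
open scoped BigOperators

open Matrix
open scoped ComplexOrder

noncomputable section
namespace TQA

variable {n : Type*} [Fintype n] [DecidableEq n]


variable {n : Type*} [Fintype n] [DecidableEq n]

/-- m-th eigenvector of a hermitian matrix, as a plain function. -/
def evec {M : Matrix n n ℂ} (hM : M.IsHermitian) (m : n) : n → ℂ := ⇑(hM.eigenvectorBasis m)

/-- coefficient of x along m-th eigenvector -/
def coef {M : Matrix n n ℂ} (hM : M.IsHermitian) (x : n → ℂ) (m : n) : ℂ :=
  star (evec hM m) ⬝ᵥ x

lemma coef_eq {M : Matrix n n ℂ} (hM : M.IsHermitian) (x : n → ℂ) (m : n) :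
    coef hM x m = ((hM.eigenvectorUnitary : Matrix n n ℂ)ᴴ *ᵥ x) m := by
  simp [coef, evec, Matrix.mulVec, dotProduct, Matrix.conjTranspose_apply,
    Matrix.IsHermitian.eigenvectorUnitary_apply]

lemma evec_complete {M : Matrix n n ℂ} (hM : M.IsHermitian) (α β : n) :
    ∑ m, evec hM m α * (starRingEnd ℂ) (evec hM m β) = if α = β then 1 else 0 := by
  have h := (Matrix.mem_unitaryGroup_iff).mp (hM.eigenvectorUnitary).2
  have h2 := congrFun (congrFun (congrArg (fun (M : Matrix n n ℂ) => (M : n → n → ℂ)) h) α) β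
  simpa [Matrix.mul_apply, Matrix.star_eq_conjTranspose, Matrix.conjTranspose_apply,
    Matrix.IsHermitian.eigenvectorUnitary_apply, Matrix.one_apply, evec] using h2

lemma evec_ortho {M : Matrix n n ℂ} (hM : M.IsHermitian) (i j : n) :
    star (evec hM i) ⬝ᵥ evec hM j = if i = j then 1 else 0 := by
  have h := (Matrix.mem_unitaryGroup_iff').mp (hM.eigenvectorUnitary).2
  have h2 := congrFun (congrFun (congrArg (fun (M : Matrix n n ℂ) => (M : n → n → ℂ)) h) i) j
  simpa [Matrix.mul_apply, Matrix.star_eq_conjTranspose, Matrix.conjTranspose_apply,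
    Matrix.IsHermitian.eigenvectorUnitary_apply, Matrix.one_apply, evec,
    dotProduct, mul_comm] using h2


lemma quad_eq {M : Matrix n n ℂ} (hM : M.IsHermitian) (x : n → ℂ) :
    star x ⬝ᵥ (M *ᵥ x) = ∑ m, (hM.eigenvalues m : ℂ) * (Complex.normSq (coef hM x m) : ℂ) := by
  set U := (hM.eigenvectorUnitary : Matrix n n ℂ) with hU
  have hsp : M = U * Matrix.diagonal (RCLike.ofReal ∘ hM.eigenvalues) * star U := hM.spectral_theorem
  have hstar : star x ᵥ* U = star (Uᴴ *ᵥ x) := by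
    rw [Matrix.star_mulVec, Matrix.conjTranspose_conjTranspose]
  calc star x ⬝ᵥ (M *ᵥ x)
      = star x ⬝ᵥ (U *ᵥ ((Matrix.diagonal (RCLike.ofReal ∘ hM.eigenvalues)) *ᵥ (Uᴴ *ᵥ x))) := by
        rw [Matrix.mulVec_mulVec, Matrix.mulVec_mulVec, ← Matrix.star_eq_conjTranspose U, ← hsp]
    _ = star (Uᴴ *ᵥ x) ⬝ᵥ ((Matrix.diagonal (RCLike.ofReal ∘ hM.eigenvalues)) *ᵥ (Uᴴ *ᵥ x)) := by
        rw [Matrix.dotProduct_mulVec, hstar]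
    _ = ∑ m, (hM.eigenvalues m : ℂ) * (Complex.normSq ((Uᴴ *ᵥ x) m) : ℂ) := by
        simp only [Matrix.mulVec_diagonal, dotProduct, Pi.star_apply]
        refine Finset.sum_congr rfl fun m _ => ?_
        have hz : ∀ z : ℂ, star z * z = (Complex.normSq z : ℂ) := fun z => by
          rw [Complex.star_def, ← Complex.normSq_eq_conj_mul_self]
        rw [show star ((Uᴴ *ᵥ x) m) * ((RCLike.ofReal ∘ hM.eigenvalues) m * (Uᴴ *ᵥ x) m)
            = (RCLike.ofReal ∘ hM.eigenvalues) m * (star ((Uᴴ *ᵥ x) m) * (Uᴴ *ᵥ x) m) by ring,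
          hz]
        rfl
    _ = _ := by
        refine Finset.sum_congr rfl fun m _ => ?_
        rw [coef_eq]

lemma nsq_eq {M : Matrix n n ℂ} (hM : M.IsHermitian) (x : n → ℂ) :
    ∑ α, Complex.normSq (x α) = ∑ m, Complex.normSq (coef hM x m) := by
  set U := (hM.eigenvectorUnitary : Matrix n n ℂ) with hU
  have h1 : (U * Uᴴ) = 1 := by
    have := (Matrix.mem_unitaryGroup_iff).mp (hM.eigenvectorUnitary).2
    simpa [Matrix.star_eq_conjTranspose] using this
  have hstar : star x ᵥ* U = star (Uᴴ *ᵥ x) := by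
    rw [Matrix.star_mulVec, Matrix.conjTranspose_conjTranspose]
  have key : star x ⬝ᵥ x = star (Uᴴ *ᵥ x) ⬝ᵥ (Uᴴ *ᵥ x) := by
    have : star (Uᴴ *ᵥ x) ⬝ᵥ (Uᴴ *ᵥ x) = star x ⬝ᵥ x := by
      rw [← hstar, ← Matrix.dotProduct_mulVec, Matrix.mulVec_mulVec, h1, Matrix.one_mulVec]
    exact this.symm
  have : ((∑ α, Complex.normSq (x α) : ℝ) : ℂ) = ((∑ m, Complex.normSq (coef hM x m) : ℝ) : ℂ) := by
    push_cast
    calc ((∑ α, (Complex.normSq (x α) : ℂ))) = star x ⬝ᵥ x := by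
          simp [dotProduct, Complex.normSq_eq_conj_mul_self]
      _ = star (Uᴴ *ᵥ x) ⬝ᵥ (Uᴴ *ᵥ x) := key
      _ = ∑ m, (Complex.normSq (coef hM x m) : ℂ) := by
          simp only [dotProduct, Pi.star_apply]
          refine Finset.sum_congr rfl fun m _ => ?_
          rw [coef_eq, Complex.normSq_eq_conj_mul_self]
          rfl
  exact_mod_cast this


lemma quad_re {M : Matrix n n ℂ} (hM : M.IsHermitian) (x : n → ℂ) :
    (star x ⬝ᵥ (M *ᵥ x)).re = ∑ m, hM.eigenvalues m * Complex.normSq (coef hM x m) := by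
  rw [quad_eq hM x]
  push_cast
  rw [Complex.re_sum]
  refine Finset.sum_congr rfl fun m _ => ?_
  simp [Complex.ofReal_mul]

/-- upper bound on Rayleigh quotient, with one coefficient known to vanish -/
lemma quad_re_le' {M : Matrix n n ℂ} (hM : M.IsHermitian) (t : ℝ) (j0 : n)
    (h : ∀ m, m ≠ j0 → hM.eigenvalues m ≤ t) (x : n → ℂ) (hx : coef hM x j0 = 0) :
    (star x ⬝ᵥ (M *ᵥ x)).re ≤ t * ∑ α, Complex.normSq (x α) := by
  rw [quad_re hM x, nsq_eq hM x, Finset.mul_sum]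
  refine Finset.sum_le_sum fun m _ => ?_
  by_cases hm : m = j0
  · subst hm; simp [hx]
  · exact mul_le_mul_of_nonneg_right (h m hm) (Complex.normSq_nonneg _)

lemma quad_re_ge' {M : Matrix n n ℂ} (hM : M.IsHermitian) (s : ℝ) (j0 : n)
    (h : ∀ m, m ≠ j0 → s ≤ hM.eigenvalues m) (x : n → ℂ) (hx : coef hM x j0 = 0) :
    s * (∑ α, Complex.normSq (x α)) ≤ (star x ⬝ᵥ (M *ᵥ x)).re := by
  rw [quad_re hM x, nsq_eq hM x, Finset.mul_sum]
  refine Finset.sum_le_sum fun m _ => ?_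
  by_cases hm : m = j0
  · subst hm; simp [hx]
  · exact mul_le_mul_of_nonneg_right (h m hm) (Complex.normSq_nonneg _)

lemma quad_re_le {M : Matrix n n ℂ} (hM : M.IsHermitian) (t : ℝ)
    (h : ∀ m, hM.eigenvalues m ≤ t) (x : n → ℂ) :
    (star x ⬝ᵥ (M *ᵥ x)).re ≤ t * ∑ α, Complex.normSq (x α) := by
  rw [quad_re hM x, nsq_eq hM x, Finset.mul_sum]
  exact Finset.sum_le_sum fun m _ =>
    mul_le_mul_of_nonneg_right (h m) (Complex.normSq_nonneg _)

lemma evec_unit {M : Matrix n n ℂ} (hM : M.IsHermitian) (m : n) :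
    ∑ α, Complex.normSq (evec hM m α) = 1 := by
  have h := evec_ortho hM m m
  simp only [if_pos] at h
  have : ((∑ α, Complex.normSq (evec hM m α) : ℝ) : ℂ) = 1 := by
    push_cast
    rw [← h]
    simp [dotProduct, Complex.normSq_eq_conj_mul_self]
  exact_mod_cast this

lemma mulVec_evec {M : Matrix n n ℂ} (hM : M.IsHermitian) (m : n) :
    M *ᵥ evec hM m = fun i => (hM.eigenvalues m : ℂ) * evec hM m i := by
  have h := hM.mulVec_eigenvectorBasis m
  funext i
  have := congrFun h i
  simpa [evec, Complex.real_smul] using this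

lemma quad_evec {M : Matrix n n ℂ} (hM : M.IsHermitian) (m : n) :
    star (evec hM m) ⬝ᵥ (M *ᵥ evec hM m) = (hM.eigenvalues m : ℂ) := by
  rw [mulVec_evec hM m]
  have : (star (evec hM m) ⬝ᵥ fun i => (hM.eigenvalues m : ℂ) * evec hM m i)
      = (hM.eigenvalues m : ℂ) * (star (evec hM m) ⬝ᵥ evec hM m) := by
    simp [dotProduct, Finset.mul_sum]
    refine Finset.sum_congr rfl fun i _ => by ring
  rw [this, evec_ortho hM m m]
  simp

lemma psd_quad_re_nonneg {P : Matrix n n ℂ} (hP : P.PosSemidef) (x : n → ℂ) :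
    0 ≤ (star x ⬝ᵥ (P *ᵥ x)).re := by
  have := hP.dotProduct_mulVec_nonneg x
  exact_mod_cast (Complex.le_def.mp this).1

lemma trace_eq_sum_eig {M : Matrix n n ℂ} (hM : M.IsHermitian) :
    M.trace = ∑ m, (hM.eigenvalues m : ℂ) := by
  set U := (hM.eigenvectorUnitary : Matrix n n ℂ) with hU
  have h1 : Uᴴ * U = 1 := by
    have := (Matrix.mem_unitaryGroup_iff').mp (hM.eigenvectorUnitary).2
    simpa [Matrix.star_eq_conjTranspose] using this
  have hsp : M = U * Matrix.diagonal (RCLike.ofReal ∘ hM.eigenvalues) * Uᴴ := by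
    rw [← Matrix.star_eq_conjTranspose U]; exact hM.spectral_theorem
  calc M.trace = (U * Matrix.diagonal (RCLike.ofReal ∘ hM.eigenvalues) * Uᴴ).trace := by rw [← hsp]
    _ = (Uᴴ * U * Matrix.diagonal (RCLike.ofReal ∘ hM.eigenvalues)).trace := by
        rw [Matrix.trace_mul_cycle]
    _ = ∑ m, (hM.eigenvalues m : ℂ) := by rw [h1, one_mul, Matrix.trace_diagonal]; rfl



/-- a nonzero vector orthogonal (in the hermitian sense) to two given vectors -/
lemma exists_perp (a b : Fin 3 → ℂ) :
    ∃ y : Fin 3 → ℂ, y ≠ 0 ∧ star a ⬝ᵥ y = 0 ∧ star b ⬝ᵥ y = 0 := by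
  by_contra hcon
  push_neg at hcon
  set D : Matrix (Fin 2) (Fin 3) ℂ := Matrix.of ![star a, star b] with hD
  have hinj : Function.Injective D.mulVecLin := by
    rw [← LinearMap.ker_eq_bot]
    rw [Submodule.eq_bot_iff]
    intro y hy
    by_contra hy0
    have h0 : D *ᵥ y = 0 := hy
    have h1 : star a ⬝ᵥ y = 0 := by
      have := congrFun h0 0
      simpa [hD, Matrix.mulVec, dotProduct] using this
    have h2 : star b ⬝ᵥ y = 0 := by
      have := congrFun h0 1
      simpa [hD, Matrix.mulVec, dotProduct] using this
    exact (hcon y hy0 h1) h2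
  have hle := LinearMap.finrank_le_finrank_of_injective hinj
  simp [Module.finrank_pi] at hle

lemma fin3_bound (ν : Fin 3 → ℝ) (S T : ℝ) (r k : Fin 3) (hrk : r ≠ k)
    (hsum : ν 0 + ν 1 + ν 2 = S) (hk : ∀ m, ν k ≤ ν m) (hub : ∀ m, ν m ≤ T) :
    (S - T) / 2 ≤ ν r := by
  fin_cases r <;> fin_cases k <;>
    first
      | exact absurd rfl hrk
      | (have h0 := hk 0; have h1 := hk 1; have h2 := hk 2;
         have u0 := hub 0; have u1 := hub 1; have u2 := hub 2;
         simp only [show (⟨0, by omega⟩ : Fin 3) = 0 from rfl, show (⟨1, by omega⟩ : Fin 3) = 1 from rfl,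
           show (⟨2, by omega⟩ : Fin 3) = 2 from rfl] at *; linarith)

/-- contraction of a complete orthonormal family -/
lemma sum_contract (v : Fin 3 → Fin 3 → ℂ)
    (hv : ∀ α β, (∑ m, v m α * (starRingEnd ℂ) (v m β)) = if α = β then 1 else 0)
    (f g : Fin 3 → ℂ) :
    ∑ m, (∑ i, (starRingEnd ℂ) (v m i) * f i) * (∑ i', v m i' * (starRingEnd ℂ) (g i')) =
      ∑ i, f i * (starRingEnd ℂ) (g i) := by
  have key : ∀ m, (∑ i, (starRingEnd ℂ) (v m i) * f i) * (∑ i', v m i' * (starRingEnd ℂ) (g i'))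
      = ∑ i, ∑ i', f i * (starRingEnd ℂ) (g i') * ((starRingEnd ℂ) (v m i) * v m i') := by
    intro m
    rw [Finset.sum_mul_sum]
    refine Finset.sum_congr rfl fun i _ => Finset.sum_congr rfl fun i' _ => by ring
  calc ∑ m, (∑ i, (starRingEnd ℂ) (v m i) * f i) * (∑ i', v m i' * (starRingEnd ℂ) (g i'))
      = ∑ m, ∑ i, ∑ i', f i * (starRingEnd ℂ) (g i') * ((starRingEnd ℂ) (v m i) * v m i') := by
        exact Finset.sum_congr rfl fun m _ => key m
    _ = ∑ i, ∑ i', ∑ m, f i * (starRingEnd ℂ) (g i') * ((starRingEnd ℂ) (v m i) * v m i') := by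
        rw [Finset.sum_comm]
        exact Finset.sum_congr rfl fun i _ => Finset.sum_comm
    _ = ∑ i, ∑ i', f i * (starRingEnd ℂ) (g i') * (∑ m, (starRingEnd ℂ) (v m i) * v m i') := by
        refine Finset.sum_congr rfl fun i _ => Finset.sum_congr rfl fun i' _ => ?_
        rw [Finset.mul_sum]
    _ = ∑ i, ∑ i', f i * (starRingEnd ℂ) (g i') * (if i = i' then 1 else 0) := by
        refine Finset.sum_congr rfl fun i _ => Finset.sum_congr rfl fun i' _ => ?_
        congr 1
        have := hv i' i
        calc ∑ m, (starRingEnd ℂ) (v m i) * v m i'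
            = (starRingEnd ℂ) (∑ m, v m i * (starRingEnd ℂ) (v m i')) := by
              rw [map_sum]
              exact Finset.sum_congr rfl fun m _ => by
                rw [RingHom.map_mul, Complex.conj_conj]
          _ = (starRingEnd ℂ) (if i = i' then 1 else 0) := by rw [hv i i']
          _ = if i = i' then 1 else 0 := by split <;> simp
    _ = ∑ i, f i * (starRingEnd ℂ) (g i) := by
        refine Finset.sum_congr rfl fun i _ => ?_
        simp



/-- the slice of the tensor `c` along a vector `e` in the first leg -/
def sl (c : Fin 3 → Fin 3 → Fin 3 → ℂ) (e : Fin 3 → ℂ) : Matrix (Fin 3) (Fin 3) ℂ :=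
  Matrix.of fun j k => ∑ i, (starRingEnd ℂ) (e i) * c i j k

/-- entrywise conjugate -/
def conjM (X : Matrix (Fin 3) (Fin 3) ℂ) : Matrix (Fin 3) (Fin 3) ℂ :=
  Matrix.of fun j k => (starRingEnd ℂ) (X j k)

lemma T1 (c : Fin 3 → Fin 3 → Fin 3 → ℂ) (v : Fin 3 → Fin 3 → ℂ)
    (hv : ∀ α β, (∑ m, v m α * (starRingEnd ℂ) (v m β)) = if α = β then 1 else 0) :
    rho2 c = ∑ m, sl c (v m) * (sl c (v m))ᴴ := by
  ext j j'
  have : (∑ m, sl c (v m) * (sl c (v m))ᴴ) j j'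
      = ∑ m, ∑ k, (sl c (v m)) j k * (starRingEnd ℂ) ((sl c (v m)) j' k) := by
    rw [Matrix.sum_apply]
    refine Finset.sum_congr rfl fun m _ => ?_
    rw [Matrix.mul_apply]
    exact Finset.sum_congr rfl fun k _ => by rw [Matrix.conjTranspose_apply, RCLike.star_def]
  rw [this]
  have hsw : ∑ m, ∑ k, (sl c (v m)) j k * (starRingEnd ℂ) ((sl c (v m)) j' k)
      = ∑ k, ∑ m, (sl c (v m)) j k * (starRingEnd ℂ) ((sl c (v m)) j' k) := Finset.sum_comm
  rw [hsw]
  have hk : ∀ k, ∑ m, (sl c (v m)) j k * (starRingEnd ℂ) ((sl c (v m)) j' k)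
      = ∑ i, c i j k * (starRingEnd ℂ) (c i j' k) := by
    intro k
    have := sum_contract v hv (fun i => c i j k) (fun i' => c i' j' k)
    rw [← this]
    refine Finset.sum_congr rfl fun m _ => ?_
    have h2 : (starRingEnd ℂ) ((sl c (v m)) j' k) = ∑ i', v m i' * (starRingEnd ℂ) (c i' j' k) := by
      simp only [sl, Matrix.of_apply, map_sum]
      exact Finset.sum_congr rfl fun i' _ => by rw [RingHom.map_mul, Complex.conj_conj]
    rw [h2]
    rfl
  rw [Finset.sum_congr rfl fun k _ => hk k, Finset.sum_comm]
  rfl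

lemma T2 (c : Fin 3 → Fin 3 → Fin 3 → ℂ) (v : Fin 3 → Fin 3 → ℂ)
    (hv : ∀ α β, (∑ m, v m α * (starRingEnd ℂ) (v m β)) = if α = β then 1 else 0) :
    rho3 c = ∑ m, (conjM (sl c (v m)))ᴴ * (conjM (sl c (v m))) := by
  ext k k'
  have : (∑ m, (conjM (sl c (v m)))ᴴ * (conjM (sl c (v m)))) k k'
      = ∑ m, ∑ j, (sl c (v m)) j k * (starRingEnd ℂ) ((sl c (v m)) j k') := by
    rw [Matrix.sum_apply]
    refine Finset.sum_congr rfl fun m _ => ?_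
    rw [Matrix.mul_apply]
    refine Finset.sum_congr rfl fun j _ => ?_
    rw [Matrix.conjTranspose_apply, RCLike.star_def]
    simp only [conjM, Matrix.of_apply, Complex.conj_conj]
  rw [this]
  have hsw : ∑ m, ∑ j, (sl c (v m)) j k * (starRingEnd ℂ) ((sl c (v m)) j k')
      = ∑ j, ∑ m, (sl c (v m)) j k * (starRingEnd ℂ) ((sl c (v m)) j k') := Finset.sum_comm
  rw [hsw]
  have hj : ∀ j, ∑ m, (sl c (v m)) j k * (starRingEnd ℂ) ((sl c (v m)) j k')
      = ∑ i, c i j k * (starRingEnd ℂ) (c i j k') := by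
    intro j
    have := sum_contract v hv (fun i => c i j k) (fun i' => c i' j k')
    rw [← this]
    refine Finset.sum_congr rfl fun m _ => ?_
    have h2 : (starRingEnd ℂ) ((sl c (v m)) j k') = ∑ i', v m i' * (starRingEnd ℂ) (c i' j k') := by
      simp only [sl, Matrix.of_apply, map_sum]
      exact Finset.sum_congr rfl fun i' _ => by rw [RingHom.map_mul, Complex.conj_conj]
    rw [h2]
    rfl
  rw [Finset.sum_congr rfl fun j _ => hj j, Finset.sum_comm]
  rfl

lemma T3 (c : Fin 3 → Fin 3 → Fin 3 → ℂ) (e : Fin 3 → ℂ) :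
    star e ⬝ᵥ (rho1 c *ᵥ e) = ∑ j, ∑ k, (Complex.normSq ((sl c e) j k) : ℂ) := by
  have expand : ∀ j k, (Complex.normSq ((sl c e) j k) : ℂ)
      = ∑ i, ∑ i', (starRingEnd ℂ) (e i) * c i j k * (e i' * (starRingEnd ℂ) (c i' j k)) := by
    intro j k
    rw [Complex.normSq_eq_conj_mul_self]
    simp only [sl, Matrix.of_apply, map_sum]
    rw [Finset.sum_mul_sum]
    rw [Finset.sum_comm]
    refine Finset.sum_congr rfl fun i _ => Finset.sum_congr rfl fun i' _ => ?_
    rw [RingHom.map_mul, Complex.conj_conj]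
    ring
  calc star e ⬝ᵥ (rho1 c *ᵥ e)
      = ∑ i, ∑ i', (starRingEnd ℂ) (e i) * ((∑ j, ∑ k, c i j k * (starRingEnd ℂ) (c i' j k)) * e i') := by
        simp only [dotProduct, Matrix.mulVec, Pi.star_apply, rho1, Matrix.of_apply]
        refine Finset.sum_congr rfl fun i _ => ?_
        rw [Finset.mul_sum]
        rfl
    _ = ∑ j, ∑ k, ∑ i, ∑ i', (starRingEnd ℂ) (e i) * c i j k * (e i' * (starRingEnd ℂ) (c i' j k)) := by
        have step : ∀ i i', (starRingEnd ℂ) (e i) * ((∑ j, ∑ k, c i j k * (starRingEnd ℂ) (c i' j k)) * e i')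
            = ∑ j, ∑ k, (starRingEnd ℂ) (e i) * c i j k * (e i' * (starRingEnd ℂ) (c i' j k)) := by
          intro i i'
          rw [Finset.sum_mul, Finset.mul_sum]
          refine Finset.sum_congr rfl fun j _ => ?_
          rw [Finset.sum_mul, Finset.mul_sum]
          refine Finset.sum_congr rfl fun k _ => by ring
        rw [Finset.sum_congr rfl fun i _ => Finset.sum_congr rfl fun i' _ => step i i']
        calc ∑ i, ∑ i', ∑ j, ∑ k, (starRingEnd ℂ) (e i) * c i j k * (e i' * (starRingEnd ℂ) (c i' j k))
            = ∑ i, ∑ j, ∑ i', ∑ k, (starRingEnd ℂ) (e i) * c i j k * (e i' * (starRingEnd ℂ) (c i' j k)) :=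
              Finset.sum_congr rfl fun i _ => Finset.sum_comm
          _ = ∑ j, ∑ i, ∑ i', ∑ k, (starRingEnd ℂ) (e i) * c i j k * (e i' * (starRingEnd ℂ) (c i' j k)) :=
              Finset.sum_comm
          _ = ∑ j, ∑ i, ∑ k, ∑ i', (starRingEnd ℂ) (e i) * c i j k * (e i' * (starRingEnd ℂ) (c i' j k)) :=
              Finset.sum_congr rfl fun j _ => Finset.sum_congr rfl fun i _ => Finset.sum_comm
          _ = ∑ j, ∑ k, ∑ i, ∑ i', (starRingEnd ℂ) (e i) * c i j k * (e i' * (starRingEnd ℂ) (c i' j k)) :=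
              Finset.sum_congr rfl fun j _ => Finset.sum_comm
    _ = ∑ j, ∑ k, (Complex.normSq ((sl c e) j k) : ℂ) := by
        exact Finset.sum_congr rfl fun j _ => Finset.sum_congr rfl fun k _ => (expand j k).symm

lemma trace_gram (X : Matrix (Fin 3) (Fin 3) ℂ) :
    (X * Xᴴ).trace = ∑ j, ∑ k, (Complex.normSq (X j k) : ℂ) := by
  simp only [Matrix.trace, Matrix.diag, Matrix.mul_apply, Matrix.conjTranspose_apply]
  refine Finset.sum_congr rfl fun j _ => Finset.sum_congr rfl fun k _ => ?_
  rw [RCLike.star_def, Complex.mul_conj]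

lemma quad_gram (N : Matrix (Fin 3) (Fin 3) ℂ) (f : Fin 3 → ℂ) :
    star f ⬝ᵥ ((Nᴴ * N) *ᵥ f) = ∑ j, (Complex.normSq ((N *ᵥ f) j) : ℂ) := by
  rw [← Matrix.mulVec_mulVec, Matrix.dotProduct_mulVec, ← Matrix.star_mulVec]
  simp only [dotProduct, Pi.star_apply]
  refine Finset.sum_congr rfl fun j _ => ?_
  rw [RCLike.star_def, ← Complex.normSq_eq_conj_mul_self]

lemma conjM_mulVec (X : Matrix (Fin 3) (Fin 3) ℂ) (z : Fin 3 → ℂ) :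
    (conjM X) *ᵥ (fun i => (starRingEnd ℂ) (z i)) = fun j => (starRingEnd ℂ) ((X *ᵥ z) j) := by
  funext j
  simp only [conjM, Matrix.mulVec, dotProduct, Matrix.of_apply, map_sum]
  refine Finset.sum_congr rfl fun k _ => ?_
  rw [RingHom.map_mul]


lemma fin3_le_two (i : Fin 3) : i ≤ 2 := by fin_cases i <;> decide

lemma fin3_le_one {i : Fin 3} (h : i ≠ 2) : i ≤ 1 := by
  fin_cases i
  · decide
  · decide
  · exact absurd rfl h

/-- The core inequality: middle eigenvalue of `rho1` is at most
middle eigenvalue of `rho2` plus top eigenvalue of `rho3`. -/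
lemma core (c : Fin 3 → Fin 3 → Fin 3 → ℂ) (lA lB lC : Fin 3 → ℝ)
    (hA : IsOrderedSpectrum (rho1 c) lA) (hB : IsOrderedSpectrum (rho2 c) lB)
    (hC : IsOrderedSpectrum (rho3 c) lC) :
    lA 1 ≤ lB 1 + lC 2 := by
  obtain ⟨mA, hermA, σA, hlA⟩ := hA
  obtain ⟨mB, hermB, σB, hlB⟩ := hB
  obtain ⟨mC, hermC, σC, hlC⟩ := hC
  set p : ℝ := lA 2 with hp
  set q : ℝ := lA 1 with hq
  have hpq : q ≤ p := mA (by decide : (1 : Fin 3) ≤ 2)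
  -- the slices along the eigenvectors of rho1
  set vA : Fin 3 → (Fin 3 → ℂ) := fun m => evec hermA m with hvA
  have hcomp : ∀ α β, (∑ m, vA m α * (starRingEnd ℂ) (vA m β)) = if α = β then 1 else 0 :=
    fun α β => evec_complete hermA α β
  set X : Matrix (Fin 3) (Fin 3) ℂ := sl c (vA (σA 2)) with hX
  set Y : Matrix (Fin 3) (Fin 3) ℂ := sl c (vA (σA 1)) with hY
  set Z : Matrix (Fin 3) (Fin 3) ℂ := sl c (vA (σA 0)) with hZ
  -- traces of the slice Grams
  have htr : ∀ i : Fin 3, (sl c (vA (σA i)) * (sl c (vA (σA i)))ᴴ).trace = ((lA i : ℝ) : ℂ) := by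
    intro i
    rw [trace_gram, ← T3 c (vA (σA i))]
    have := quad_evec hermA (σA i)
    rw [hvA]
    rw [this, ← hlA i]
  -- decomposition of rho2 and rho3
  have hrho2 : rho2 c = (X * Xᴴ + Y * Yᴴ) + Z * Zᴴ := by
    rw [T1 c vA hcomp, ← Equiv.sum_comp σA (fun m => sl c (vA m) * (sl c (vA m))ᴴ),
      Fin.sum_univ_three]
    abel
  have hrho3 : rho3 c =
      ((conjM X)ᴴ * conjM X + (conjM Y)ᴴ * conjM Y) + (conjM Z)ᴴ * conjM Z := by
    rw [T2 c vA hcomp, ← Equiv.sum_comp σA (fun m => (conjM (sl c (vA m)))ᴴ * conjM (sl c (vA m))),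
      Fin.sum_univ_three]
    abel
  set B' : Matrix (Fin 3) (Fin 3) ℂ := X * Xᴴ + Y * Yᴴ with hB'
  set C' : Matrix (Fin 3) (Fin 3) ℂ := (conjM X)ᴴ * conjM X + (conjM Y)ᴴ * conjM Y with hC'
  have hpsdB' : B'.PosSemidef :=
    (Matrix.posSemidef_self_mul_conjTranspose X).add (Matrix.posSemidef_self_mul_conjTranspose Y)
  have hpsdC' : C'.PosSemidef :=
    (Matrix.posSemidef_conjTranspose_mul_self (conjM X)).add
      (Matrix.posSemidef_conjTranspose_mul_self (conjM Y))
  have hermB' : B'.IsHermitian := hpsdB'.1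
  have hermC' : C'.IsHermitian := hpsdC'.1
  -- top eigenvalue of C'
  obtain ⟨ic, hic⟩ := Finite.exists_max hermC'.eigenvalues
  set t : ℝ := hermC'.eigenvalues ic with ht
  have htnn : 0 ≤ t := hpsdC'.eigenvalues_nonneg ic
  -- t ≤ lC 2
  have hCle : ∀ m, hermC.eigenvalues m ≤ lC 2 := by
    intro m
    have h1 := hlC (σC.symm m)
    rw [Equiv.apply_symm_apply] at h1
    rw [← h1]
    exact mC (fin3_le_two _)
  have htlC : t ≤ lC 2 := by
    set z : Fin 3 → ℂ := evec hermC' ic with hz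
    have h1 : (star z ⬝ᵥ (rho3 c *ᵥ z)).re ≤ lC 2 * ∑ α, Complex.normSq (z α) :=
      quad_re_le hermC (lC 2) hCle z
    have hzu : ∑ α, Complex.normSq (z α) = 1 := evec_unit hermC' ic
    rw [hzu, mul_one] at h1
    have h2 : (star z ⬝ᵥ (rho3 c *ᵥ z)) = star z ⬝ᵥ (C' *ᵥ z)
        + star z ⬝ᵥ (((conjM Z)ᴴ * conjM Z) *ᵥ z) := by
      rw [hrho3, Matrix.add_mulVec, dotProduct_add]
    have h3 : star z ⬝ᵥ (C' *ᵥ z) = (t : ℂ) := quad_evec hermC' ic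
    have h4 : 0 ≤ (star z ⬝ᵥ (((conjM Z)ᴴ * conjM Z) *ᵥ z)).re :=
      psd_quad_re_nonneg (Matrix.posSemidef_conjTranspose_mul_self (conjM Z)) z
    have h5 : (star z ⬝ᵥ (rho3 c *ᵥ z)).re
        = t + (star z ⬝ᵥ (((conjM Z)ᴴ * conjM Z) *ᵥ z)).re := by
      rw [h2, Complex.add_re, h3, Complex.ofReal_re]
    linarith
  -- top eigenvalues of X*Xᴴ and Y*Yᴴ are at most t
  have key : ∀ W : Matrix (Fin 3) (Fin 3) ℂ, (W = X ∨ W = Y) →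
      ∀ m, ((Matrix.posSemidef_self_mul_conjTranspose W).1).eigenvalues m ≤ t := by
    intro W hW m
    set hermW : (W * Wᴴ).IsHermitian := (Matrix.posSemidef_self_mul_conjTranspose W).1
    set lam : ℝ := hermW.eigenvalues m with hlam
    have hlamnn : 0 ≤ lam := (Matrix.posSemidef_self_mul_conjTranspose W).eigenvalues_nonneg m
    rcases eq_or_lt_of_le hlamnn with h0 | hpos
    · rw [← h0]; exact htnn
    set g : Fin 3 → ℂ := evec hermW m with hg
    have hgu : ∑ α, Complex.normSq (g α) = 1 := evec_unit hermW m
    have hgeig : (W * Wᴴ) *ᵥ g = fun i => (lam : ℂ) * g i := mulVec_evec hermW m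
    set f : Fin 3 → ℂ := fun k => (starRingEnd ℂ) ((Wᴴ *ᵥ g) k) with hf
    -- ∑ normSq f = lam
    have hnf : ∑ α, Complex.normSq (f α) = lam := by
      have e1 : star g ⬝ᵥ ((W * Wᴴ) *ᵥ g) = (lam : ℂ) := quad_evec hermW m
      have e2 : star g ⬝ᵥ (((Wᴴ)ᴴ * Wᴴ) *ᵥ g) = ∑ j, (Complex.normSq ((Wᴴ *ᵥ g) j) : ℂ) :=
        quad_gram (Wᴴ) g
      rw [Matrix.conjTranspose_conjTranspose] at e2
      have e3 : ((∑ j, Complex.normSq ((Wᴴ *ᵥ g) j) : ℝ) : ℂ) = ((lam : ℝ) : ℂ) := by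
        push_cast
        rw [← e2, e1]
      have e4 : (∑ j, Complex.normSq ((Wᴴ *ᵥ g) j) : ℝ) = lam := by exact_mod_cast e3
      rw [← e4]
      refine Finset.sum_congr rfl fun α _ => ?_
      rw [hf]
      exact Complex.normSq_conj _
    -- (conjM W) *ᵥ f = lam * conj g
    have hNf : (conjM W) *ᵥ f = fun j => (lam : ℂ) * (starRingEnd ℂ) (g j) := by
      rw [hf]
      rw [conjM_mulVec W (Wᴴ *ᵥ g)]
      funext j
      rw [Matrix.mulVec_mulVec, hgeig]
      simp only [RingHom.map_mul, Complex.conj_ofReal]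
    -- lower bound for the C' Rayleigh quotient at f
    have hlow : lam * lam ≤ (star f ⬝ᵥ (C' *ᵥ f)).re := by
      have e1 : star f ⬝ᵥ (C' *ᵥ f) = star f ⬝ᵥ (((conjM X)ᴴ * conjM X) *ᵥ f)
          + star f ⬝ᵥ (((conjM Y)ᴴ * conjM Y) *ᵥ f) := by
        rw [hC', Matrix.add_mulVec, dotProduct_add]
      have e2 : star f ⬝ᵥ (((conjM W)ᴴ * conjM W) *ᵥ f) = ∑ j, (Complex.normSq (((conjM W) *ᵥ f) j) : ℂ) :=
        quad_gram (conjM W) f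
      have e3 : ∑ j, Complex.normSq (((conjM W) *ᵥ f) j) = lam * lam := by
        rw [hNf]
        have : ∀ j, Complex.normSq ((lam : ℂ) * (starRingEnd ℂ) (g j))
            = (lam * lam) * Complex.normSq (g j) := by
          intro j
          rw [Complex.normSq_mul, Complex.normSq_conj, Complex.normSq_ofReal]
        rw [Finset.sum_congr rfl fun j _ => this j, ← Finset.mul_sum, hgu, mul_one]
      rcases hW with rfl | rfl
      · have e4 : 0 ≤ (star f ⬝ᵥ (((conjM Y)ᴴ * conjM Y) *ᵥ f)).re :=
          psd_quad_re_nonneg (Matrix.posSemidef_conjTranspose_mul_self (conjM Y)) f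
        have e5 : (star f ⬝ᵥ (C' *ᵥ f)).re = lam * lam
            + (star f ⬝ᵥ (((conjM Y)ᴴ * conjM Y) *ᵥ f)).re := by
          rw [e1, Complex.add_re]
          congr 1
          rw [e2]
          rw [show ∑ j, (Complex.normSq (((conjM X) *ᵥ f) j) : ℂ)
              = ((∑ j, Complex.normSq (((conjM X) *ᵥ f) j) : ℝ) : ℂ) by push_cast; rfl, e3]
          exact Complex.ofReal_re _
        linarith
      · have e4 : 0 ≤ (star f ⬝ᵥ (((conjM X)ᴴ * conjM X) *ᵥ f)).re :=
          psd_quad_re_nonneg (Matrix.posSemidef_conjTranspose_mul_self (conjM X)) f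
        have e5 : (star f ⬝ᵥ (C' *ᵥ f)).re = lam * lam
            + (star f ⬝ᵥ (((conjM X)ᴴ * conjM X) *ᵥ f)).re := by
          rw [e1, Complex.add_re]
          rw [e2]
          rw [show ∑ j, (Complex.normSq (((conjM Y) *ᵥ f) j) : ℂ)
              = ((∑ j, Complex.normSq (((conjM Y) *ᵥ f) j) : ℝ) : ℂ) by push_cast; rfl, e3]
          rw [Complex.ofReal_re]
          ring
        linarith
    -- upper bound
    have hup : (star f ⬝ᵥ (C' *ᵥ f)).re ≤ t * ∑ α, Complex.normSq (f α) :=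
      quad_re_le hermC' t hic f
    rw [hnf] at hup
    have : lam * lam ≤ t * lam := le_trans hlow hup
    exact le_of_mul_le_mul_right this hpos
  have hXt : ∀ m, ((Matrix.posSemidef_self_mul_conjTranspose X).1).eigenvalues m ≤ t :=
    key X (Or.inl rfl)
  have hYt : ∀ m, ((Matrix.posSemidef_self_mul_conjTranspose Y).1).eigenvalues m ≤ t :=
    key Y (Or.inr rfl)
  -- eigenvalues of B'
  set ν : Fin 3 → ℝ := hermB'.eigenvalues with hν
  have hub : ∀ m, ν m ≤ t + t := by
    intro m
    set h : Fin 3 → ℂ := evec hermB' m with hh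
    have hhu : ∑ α, Complex.normSq (h α) = 1 := evec_unit hermB' m
    have e1 : star h ⬝ᵥ (B' *ᵥ h) = (ν m : ℂ) := quad_evec hermB' m
    have e2 : star h ⬝ᵥ (B' *ᵥ h) = star h ⬝ᵥ ((X * Xᴴ) *ᵥ h) + star h ⬝ᵥ ((Y * Yᴴ) *ᵥ h) := by
      rw [hB', Matrix.add_mulVec, dotProduct_add]
    have e3 : (star h ⬝ᵥ ((X * Xᴴ) *ᵥ h)).re ≤ t * 1 := by
      rw [← hhu]
      exact quad_re_le ((Matrix.posSemidef_self_mul_conjTranspose X).1) t hXt h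
    have e4 : (star h ⬝ᵥ ((Y * Yᴴ) *ᵥ h)).re ≤ t * 1 := by
      rw [← hhu]
      exact quad_re_le ((Matrix.posSemidef_self_mul_conjTranspose Y).1) t hYt h
    have e5 : ν m = (star h ⬝ᵥ ((X * Xᴴ) *ᵥ h)).re + (star h ⬝ᵥ ((Y * Yᴴ) *ᵥ h)).re := by
      rw [← Complex.add_re, ← e2, e1, Complex.ofReal_re]
    linarith
  have hsum : ν 0 + ν 1 + ν 2 = p + q := by
    have e1 : B'.trace = ∑ m, ((ν m : ℝ) : ℂ) := trace_eq_sum_eig hermB'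
    have e2 : B'.trace = ((p : ℝ) : ℂ) + ((q : ℝ) : ℂ) := by
      rw [hB', Matrix.trace_add]
      rw [hX, hY, htr 2, htr 1]
    have e3 : ((ν 0 + ν 1 + ν 2 : ℝ) : ℂ) = ((p + q : ℝ) : ℂ) := by
      push_cast
      rw [← Fin.sum_univ_three (fun m => ((ν m : ℝ) : ℂ)), ← e1, e2]
    exact_mod_cast e3
  obtain ⟨kk, hkk⟩ := Finite.exists_min ν
  have hνge : ∀ r, r ≠ kk → q - t ≤ ν r := by
    intro r hr
    have := fin3_bound ν (p + q) (t + t) r kk hr hsum hkk hub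
    linarith
  -- the test vector
  obtain ⟨y0, hy0ne, hy0a, hy0b⟩ := exists_perp (evec hermB' kk) (evec hermB (σB 2))
  have hnsqpos : 0 < ∑ α, Complex.normSq (y0 α) := by
    obtain ⟨α, hα⟩ := Function.ne_iff.mp hy0ne
    refine Finset.sum_pos' (fun i _ => Complex.normSq_nonneg _) ⟨α, Finset.mem_univ α, ?_⟩
    exact Complex.normSq_pos.mpr hα
  -- upper bound via rho2
  have hBle : ∀ m, m ≠ σB 2 → hermB.eigenvalues m ≤ lB 1 := by
    intro m hm
    have h1 := hlB (σB.symm m)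
    rw [Equiv.apply_symm_apply] at h1
    rw [← h1]
    refine mB (fin3_le_one ?_)
    intro hcon
    exact hm (by rw [← hcon, Equiv.apply_symm_apply])
  have hupper : (star y0 ⬝ᵥ (rho2 c *ᵥ y0)).re ≤ lB 1 * ∑ α, Complex.normSq (y0 α) :=
    quad_re_le' hermB (lB 1) (σB 2) hBle y0 hy0b
  -- lower bound via B'
  have hlower : (q - t) * (∑ α, Complex.normSq (y0 α)) ≤ (star y0 ⬝ᵥ (B' *ᵥ y0)).re :=
    quad_re_ge' hermB' (q - t) kk hνge y0 hy0a
  have hmono2 : (star y0 ⬝ᵥ (B' *ᵥ y0)).re ≤ (star y0 ⬝ᵥ (rho2 c *ᵥ y0)).re := by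
    have e1 : star y0 ⬝ᵥ (rho2 c *ᵥ y0) = star y0 ⬝ᵥ (B' *ᵥ y0)
        + star y0 ⬝ᵥ ((Z * Zᴴ) *ᵥ y0) := by
      rw [hrho2, Matrix.add_mulVec, dotProduct_add]
    have e2 : 0 ≤ (star y0 ⬝ᵥ ((Z * Zᴴ) *ᵥ y0)).re :=
      psd_quad_re_nonneg (Matrix.posSemidef_self_mul_conjTranspose Z) y0
    rw [e1, Complex.add_re]
    linarith
  have hfinal : q - t ≤ lB 1 := by
    have := le_trans hlower (le_trans hmono2 hupper)
    exact le_of_mul_le_mul_right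
      (by rw [mul_comm (q - t) _, mul_comm (lB 1) _] at this ⊢
          calc (∑ α, Complex.normSq (y0 α)) * (q - t) ≤ _ := this) hnsqpos
  linarith

end TQA
end

theorem three_qutrit_coro (c : Fin 3 → Fin 3 → Fin 3 → ℂ)
    (hnorm : ∑ i : Fin 3, ∑ j : Fin 3, ∑ k : Fin 3, ‖c i j k‖ ^ 2 = 1)
    (l : Fin 3 → Fin 3 → ℝ)
    (h1 : IsOrderedSpectrum (rho1 c) (l 0))
    (h2 : IsOrderedSpectrum (rho2 c) (l 1))
    (h3 : IsOrderedSpectrum (rho3 c) (l 2)) :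
    ∀ a b c' : Fin 3, a ≠ b → a ≠ c' → b ≠ c' →
      l a 1 ≤ l b 1 + l c' 2 := by
  intro a b c' hab hac hbc
  -- permuted tensors
  have e2a : rho1 (fun i j k => c i k j) = rho1 c := by
    ext α β; simp only [rho1, Matrix.of_apply]; all_goals first | rfl | exact Finset.sum_comm
  have e2b : rho2 (fun i j k => c i k j) = rho3 c := by
    ext α β; simp only [rho2, rho3, Matrix.of_apply]; all_goals first | rfl | exact Finset.sum_comm
  have e2c : rho3 (fun i j k => c i k j) = rho2 c := by
    ext α β; simp only [rho2, rho3, Matrix.of_apply]; all_goals first | rfl | exact Finset.sum_comm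
  have e3a : rho1 (fun i j k => c j i k) = rho2 c := by
    ext α β; simp only [rho1, rho2, Matrix.of_apply]; all_goals first | rfl | exact Finset.sum_comm
  have e3b : rho2 (fun i j k => c j i k) = rho1 c := by
    ext α β; simp only [rho1, rho2, Matrix.of_apply]; all_goals first | rfl | exact Finset.sum_comm
  have e3c : rho3 (fun i j k => c j i k) = rho3 c := by
    ext α β; simp only [rho3, Matrix.of_apply]; all_goals first | rfl | exact Finset.sum_comm
  have e4a : rho1 (fun i j k => c k i j) = rho2 c := by
    ext α β; simp only [rho1, rho2, Matrix.of_apply]; all_goals first | rfl | exact Finset.sum_comm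
  have e4b : rho2 (fun i j k => c k i j) = rho3 c := by
    ext α β; simp only [rho2, rho3, Matrix.of_apply]; all_goals first | rfl | exact Finset.sum_comm
  have e4c : rho3 (fun i j k => c k i j) = rho1 c := by
    ext α β; simp only [rho3, rho1, Matrix.of_apply]; all_goals first | rfl | exact Finset.sum_comm
  have e5a : rho1 (fun i j k => c j k i) = rho3 c := by
    ext α β; simp only [rho1, rho3, Matrix.of_apply]; all_goals first | rfl | exact Finset.sum_comm
  have e5b : rho2 (fun i j k => c j k i) = rho1 c := by
    ext α β; simp only [rho2, rho1, Matrix.of_apply]; all_goals first | rfl | exact Finset.sum_comm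
  have e5c : rho3 (fun i j k => c j k i) = rho2 c := by
    ext α β; simp only [rho3, rho2, Matrix.of_apply]; all_goals first | rfl | exact Finset.sum_comm
  have e6a : rho1 (fun i j k => c k j i) = rho3 c := by
    ext α β; simp only [rho1, rho3, Matrix.of_apply]; all_goals first | rfl | exact Finset.sum_comm
  have e6b : rho2 (fun i j k => c k j i) = rho2 c := by
    ext α β; simp only [rho2, Matrix.of_apply]; all_goals first | rfl | exact Finset.sum_comm
  have e6c : rho3 (fun i j k => c k j i) = rho1 c := by
    ext α β; simp only [rho3, rho1, Matrix.of_apply]; all_goals first | rfl | exact Finset.sum_comm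
  have i012 : l 0 1 ≤ l 1 1 + l 2 2 := TQA.core c (l 0) (l 1) (l 2) h1 h2 h3
  have i021 : l 0 1 ≤ l 2 1 + l 1 2 :=
    TQA.core (fun i j k => c i k j) (l 0) (l 2) (l 1)
      (by rw [e2a]; exact h1) (by rw [e2b]; exact h3) (by rw [e2c]; exact h2)
  have i102 : l 1 1 ≤ l 0 1 + l 2 2 :=
    TQA.core (fun i j k => c j i k) (l 1) (l 0) (l 2)
      (by rw [e3a]; exact h2) (by rw [e3b]; exact h1) (by rw [e3c]; exact h3)
  have i120 : l 1 1 ≤ l 2 1 + l 0 2 :=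
    TQA.core (fun i j k => c k i j) (l 1) (l 2) (l 0)
      (by rw [e4a]; exact h2) (by rw [e4b]; exact h3) (by rw [e4c]; exact h1)
  have i201 : l 2 1 ≤ l 0 1 + l 1 2 :=
    TQA.core (fun i j k => c j k i) (l 2) (l 0) (l 1)
      (by rw [e5a]; exact h3) (by rw [e5b]; exact h1) (by rw [e5c]; exact h2)
  have i210 : l 2 1 ≤ l 1 1 + l 0 2 :=
    TQA.core (fun i j k => c k j i) (l 2) (l 1) (l 0)
      (by rw [e6a]; exact h3) (by rw [e6b]; exact h2) (by rw [e6c]; exact h1)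
  fin_cases a <;> fin_cases b <;> fin_cases c' <;>
    first
    | exact absurd rfl hab
    | exact absurd rfl hac
    | exact absurd rfl hbc
    | exact i012
    | exact i021
    | exact i102
    | exact i120
    | exact i201
    | exact i210
end
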